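/- arXiv:math/9911183 — 8 statements merged into one kernel-verified Lean document; each statement's English description precedes it below -/
import Mathlib

section
/- Let Q be a proximity matrix. Then: (a) S = −(1−Q)(1−Q)ᵀ is negative definite, i.e. for every nonzero x ∈ ℚⁿ one has xᵀ S x < 0; (b) s_{ii} = −1 − ∑_j q_{ij} for every i (the self-intersection of an exceptional curve is −1 minus the number of points proximate to its center); (c) if moreover Q satisfies the Enriques axioms (E3) and (E4), then for all i < j one has s_{ij} = q_{ij} − #{k : q_{ik} = q_{jk} = 1}, and s_{ij} ∈ {0,1} (two exceptional curves meet transversally in at most one point). -/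
open Matrix Finset

/-- A proximity matrix: strictly upper triangular with entries `0` or `1`. -/
def IsProxMat {n : ℕ} (Q : Matrix (Fin n) (Fin n) ℤ) : Prop :=
  (∀ i j : Fin n, ¬ i < j → Q i j = 0) ∧ (∀ i j : Fin n, Q i j = 0 ∨ Q i j = 1)

/-- The intersection matrix `S = -(1-Q)(1-Q)ᵀ` of the exceptional curves. -/
def Smat {n : ℕ} (Q : Matrix (Fin n) (Fin n) ℤ) : Matrix (Fin n) (Fin n) ℤ :=
  -((1 - Q) * (1 - Q)ᵀ)

/-- For a proximity matrix `Q` with `S = -(1-Q)(1-Q)ᵀ`: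
(a) `S` is negative definite; (b) `s_{ii} = -1 - ∑_j q_{ij}`;
(c) under the Enriques axioms (E3) and (E4), for `i < j` one has
`s_{ij} = q_{ij} - #{k : q_{ik} = q_{jk} = 1}` and `s_{ij} ∈ {0, 1}`. -/
theorem proximity_intersection_matrix_props
    (n : ℕ) (hn : 1 ≤ n) (Q : Matrix (Fin n) (Fin n) ℤ) (hQ : IsProxMat Q) :
    (∀ x : Fin n → ℚ, x ≠ 0 → x ⬝ᵥ ((Smat Q).map (Int.cast : ℤ → ℚ) *ᵥ x) < 0) ∧
    (∀ i : Fin n, Smat Q i i = -1 - ∑ j, Q i j) ∧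
    ((∀ i j k : Fin n, i < j → Q i k = 1 → Q j k = 1 → Q i j = 1) →
      (∀ i j : Fin n, i < j → ∀ k k' : Fin n,
        Q i k = 1 → Q j k = 1 → Q i k' = 1 → Q j k' = 1 → k = k') →
      ∀ i j : Fin n, i < j →
        Smat Q i j =
          Q i j - ((Finset.univ.filter fun k => Q i k = 1 ∧ Q j k = 1).card : ℤ) ∧
        (Smat Q i j = 0 ∨ Smat Q i j = 1)) := by
  obtain ⟨hup, h01⟩ := hQ
  have hQdiag : ∀ i : Fin n, Q i i = 0 := fun i => hup i i (lt_irrefl i)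
  have hS : ∀ i j, Smat Q i j = -∑ k, (1 - Q) i k * (1 - Q) j k := by
    intro i j
    simp only [Smat, Matrix.neg_apply, Matrix.mul_apply, Matrix.transpose_apply]
  refine ⟨?_, ?_, ?_⟩
  · intro x hx
    set A : Matrix (Fin n) (Fin n) ℚ := (1 - Q).map (Int.cast : ℤ → ℚ) with hA
    have hmap : (Smat Q).map (Int.cast : ℤ → ℚ) = -(A * Aᵀ) := by
      have hAe : ∀ a b : Fin n, A a b = (((1 - Q) a b : ℤ) : ℚ) := fun a b => rfl
      ext i j
      rw [Matrix.map_apply, hS i j, Matrix.neg_apply, Matrix.mul_apply]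
      push_cast
      simp only [Matrix.transpose_apply, hAe]
    have htri : A.BlockTriangular id := by
      intro i j hij
      have h1 : ¬ i < j := not_lt.2 (le_of_lt hij)
      simp [hA, Matrix.map_apply, Matrix.sub_apply, Matrix.one_apply,
        (ne_of_gt hij : i ≠ j), hup i j h1]
    have hdet : A.det = 1 := by
      rw [Matrix.det_of_upperTriangular htri]
      apply Finset.prod_eq_one
      intro i _
      simp [hA, Matrix.map_apply, Matrix.sub_apply, Matrix.one_apply, hQdiag i]
    have hinj : Function.Injective (Aᵀ.mulVec) := by
      rw [Matrix.mulVec_injective_iff_isUnit]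
      rw [Matrix.isUnit_iff_isUnit_det, Matrix.det_transpose, hdet]
      exact isUnit_one
    set v : Fin n → ℚ := Aᵀ *ᵥ x with hv
    have hvne : v ≠ 0 := by
      intro h
      apply hx
      apply hinj
      rw [Matrix.mulVec_zero, ← hv, h]
    have hq : x ⬝ᵥ ((Smat Q).map (Int.cast : ℤ → ℚ) *ᵥ x) = -(v ⬝ᵥ v) := by
      rw [hmap, Matrix.neg_mulVec, dotProduct_neg, ← Matrix.mulVec_mulVec,
        Matrix.dotProduct_mulVec, hv, Matrix.mulVec_transpose]
    rw [hq]
    have hpos : 0 < v ⬝ᵥ v := by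
      rcases lt_or_eq_of_le (Finset.sum_nonneg fun k _ => mul_self_nonneg (v k)) with h | h
      · exact h
      · exact absurd ((dotProduct_self_eq_zero).1 h.symm) hvne
    linarith
  · intro i
    have hterm : ∀ k : Fin n, (1 - Q) i k * (1 - Q) i k
        = (if k = i then 1 else 0) + Q i k := by
      intro k
      by_cases h : k = i
      · subst h
        simp [Matrix.sub_apply, Matrix.one_apply, hQdiag k]
      · rcases h01 i k with h0 | h0 <;>
          simp [Matrix.sub_apply, Matrix.one_apply, Ne.symm h, h, h0]
    rw [hS i i, Finset.sum_congr rfl fun k _ => hterm k, Finset.sum_add_distrib,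
      Finset.sum_ite_eq' Finset.univ i fun _ => (1 : ℤ)]
    simp
    ring
  · intro hE3 hE4 i j hij
    have hji : Q j i = 0 := hup j i (not_lt.2 (le_of_lt hij))
    have hsum : Smat Q i j = Q i j - ∑ k, Q i k * Q j k := by
      rw [hS i j]
      have hterm : ∀ k : Fin n, (1 - Q) i k * (1 - Q) j k
          = (if k = i then -Q j k else 0) + (if k = j then -Q i k else 0)
            + Q i k * Q j k := by
        intro k
        by_cases h1 : k = i
        · subst h1
          have h2 : k ≠ j := ne_of_lt hij
          simp [Matrix.sub_apply, Matrix.one_apply, h2, Ne.symm h2, hQdiag k, hji]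
          try ring
        · by_cases h2 : k = j
          · subst h2
            simp [Matrix.sub_apply, Matrix.one_apply, h1, Ne.symm h1, hQdiag k]
            try ring
          · simp [Matrix.sub_apply, Matrix.one_apply, Ne.symm h1, Ne.symm h2, h1, h2]
            try ring
      rw [Finset.sum_congr rfl fun k _ => hterm k, Finset.sum_add_distrib,
        Finset.sum_add_distrib, Finset.sum_ite_eq' Finset.univ i fun k => -Q j k,
        Finset.sum_ite_eq' Finset.univ j fun k => -Q i k]
      simp [hji, hQdiag]
      ring
    have hcard : (∑ k, Q i k * Q j k)
        = ((Finset.univ.filter fun k => Q i k = 1 ∧ Q j k = 1).card : ℤ) := by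
      rw [← Finset.sum_boole]
      apply Finset.sum_congr rfl
      intro k _
      rcases h01 i k with h0 | h0 <;> rcases h01 j k with h0' | h0' <;>
        simp [h0, h0']
    constructor
    · rw [hsum, hcard]
    · by_cases hne : (Finset.univ.filter fun k => Q i k = 1 ∧ Q j k = 1).Nonempty
      · obtain ⟨k, hk⟩ := hne
        rw [Finset.mem_filter] at hk
        have hQij : Q i j = 1 := hE3 i j k hij hk.2.1 hk.2.2
        have hsingle : (Finset.univ.filter fun k => Q i k = 1 ∧ Q j k = 1) = {k} := by
          apply Finset.eq_singleton_iff_unique_mem.2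
          refine ⟨Finset.mem_filter.2 hk, ?_⟩
          intro x hx
          rw [Finset.mem_filter] at hx
          exact hE4 i j hij x k hx.2.1 hx.2.2 hk.2.1 hk.2.2
        left
        rw [hsum, hcard, hsingle, hQij]
        simp
      · rw [Finset.not_nonempty_iff_eq_empty] at hne
        rw [hsum, hcard, hne]
        simpa using h01 i j
end

section
/- Let Q be a proximity matrix satisfying the Enriques axioms (E1)–(E4) and let ε be a branch vector for Q, with T the associated intersection matrix and f the fiber vector. Then the set C = { z ∈ ℤⁿ : z_i ≥ 1 for all i and (T z)_k ≤ 0 for all k } contains f, is closed under taking componentwise minimum of two elements, and possesses a unique componentwise-least element (the fundamental cycle of the canonical resolution exists and is unique). -/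
open Matrix Finset

/-- `M = N⁻¹ = 1 + Q + ⋯ + Q^(n-1)`. -/
def Mmat {n : ℕ} (Q : Matrix (Fin n) (Fin n) ℤ) : Matrix (Fin n) (Fin n) ℤ :=
  ∑ k ∈ Finset.range n, Q ^ k

/-- The Enriques axioms (E1)–(E4) for a proximity matrix. -/
def EnriquesAxioms {n : ℕ} (Q : Matrix (Fin n) (Fin n) ℤ) : Prop :=
  (∀ j : Fin n, 0 < j.val → ∃ i : Fin n, i < j ∧ Q i j = 1) ∧
  (∀ j : Fin n, (Finset.univ.filter fun i => Q i j = 1).card ≤ 2) ∧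
  (∀ i j k : Fin n, i < j → Q i k = 1 → Q j k = 1 → Q i j = 1) ∧
  (∀ i j : Fin n, i < j → ∀ k k' : Fin n,
    Q i k = 1 → Q j k = 1 → Q i k' = 1 → Q j k' = 1 → k = k')

/-- A branch vector for `Q`: each `ε i ∈ {0,1}`, and `s_{ij}` is even whenever
`ε_i = ε_j = 1`. -/
def IsBranchVec {n : ℕ} (Q : Matrix (Fin n) (Fin n) ℤ) (ε : Fin n → ℤ) : Prop :=
  (∀ i, ε i = 0 ∨ ε i = 1) ∧ ∀ i j, ε i = 1 → ε j = 1 → 2 ∣ Smat Q i j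

/-- The intersection matrix `T_{ij} = (2 - ε_i)(2 - ε_j) s_{ij} / 2` of the
exceptional curves `F_i` of the canonical resolution. -/
def Tmat {n : ℕ} (Q : Matrix (Fin n) (Fin n) ℤ) (ε : Fin n → ℤ) :
    Matrix (Fin n) (Fin n) ℤ :=
  fun i j => (2 - ε i) * (2 - ε j) * Smat Q i j / 2

/-- The fiber vector `f_i = (1 + ε_i) m_{1i}` (with first blown-up point `i0`). -/
def fiberVec {n : ℕ} (Q : Matrix (Fin n) (Fin n) ℤ) (ε : Fin n → ℤ) (i0 : Fin n) :
    Fin n → ℤ :=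
  fun i => (1 + ε i) * Mmat Q i0 i

/-- `z` is the fundamental cycle for the intersection matrix `T`: the
componentwise-least vector with `z_i ≥ 1` for all `i` and `(T z)_k ≤ 0` for all `k`. -/
def IsFundCycle {n : ℕ} (T : Matrix (Fin n) (Fin n) ℤ) (z : Fin n → ℤ) : Prop :=
  (∀ i, 1 ≤ z i) ∧ (∀ k, (T *ᵥ z) k ≤ 0) ∧
  ∀ w : Fin n → ℤ, (∀ i, 1 ≤ w i) → (∀ k, (T *ᵥ w) k ≤ 0) → z ≤ w

section FundCycleAux

variable {n : ℕ} {Q : Matrix (Fin n) (Fin n) ℤ} {ε : Fin n → ℤ}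

lemma Q_nonneg' (hQ : IsProxMat Q) (i j : Fin n) : 0 ≤ Q i j := by
  rcases hQ.2 i j with h | h <;> omega

lemma Qpow_nonneg' (hQ : IsProxMat Q) (k : ℕ) (i j : Fin n) : 0 ≤ (Q ^ k) i j := by
  induction k generalizing i j with
  | zero => rw [pow_zero, Matrix.one_apply]; split <;> norm_num
  | succ k ih =>
    rw [pow_succ, Matrix.mul_apply]
    exact Finset.sum_nonneg fun l _ => mul_nonneg (ih i l) (Q_nonneg' hQ l j)

lemma Qpow_eq_zero_of_lt' (hQ : IsProxMat Q) :
    ∀ (k : ℕ) (i j : Fin n), j.val < i.val + k → (Q ^ k) i j = 0 := by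
  intro k
  induction k with
  | zero =>
    intro i j h
    simp only [pow_zero, Matrix.one_apply]
    have : i ≠ j := by intro e; subst e; omega
    simp [this]
  | succ k ih =>
    intro i j h
    rw [pow_succ, Matrix.mul_apply]
    apply Finset.sum_eq_zero
    intro l _
    by_cases hl : l.val < i.val + k
    · rw [ih i l hl, zero_mul]
    · have : ¬ l < j := by
        intro hlj
        exact absurd (Fin.lt_def.mp hlj) (by omega)
      rw [hQ.1 l j this, mul_zero]

lemma Qpow_n' (hQ : IsProxMat Q) : Q ^ n = 0 := by
  ext i j
  exact Qpow_eq_zero_of_lt' hQ n i j (by omega)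

lemma M_mul_N' (hQ : IsProxMat Q) : Mmat Q * (1 - Q) = 1 := by
  unfold Mmat
  rw [Finset.sum_mul]
  have : ∀ k ∈ Finset.range n, Q ^ k * (1 - Q) = Q ^ k - Q ^ (k+1) := by
    intro k _
    rw [mul_sub, mul_one, pow_succ]
  rw [Finset.sum_congr rfl this, Finset.sum_range_sub' (fun k => Q ^ k) n, pow_zero,
    Qpow_n' hQ, sub_zero]

lemma M_mul_Q' (hQ : IsProxMat Q) : Mmat Q * Q = Mmat Q - 1 := by
  have h := M_mul_N' hQ
  rw [mul_sub, mul_one] at h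
  linear_combination (norm := abel) -h

lemma S_mul_Mt' (hQ : IsProxMat Q) : Smat Q * (Mmat Q)ᵀ = -(1 - Q) := by
  unfold Smat
  rw [neg_mul, Matrix.mul_assoc, ← Matrix.transpose_mul, M_mul_N' hQ, Matrix.transpose_one,
    mul_one]

lemma M_nonneg' (hQ : IsProxMat Q) (i j : Fin n) : 0 ≤ Mmat Q i j := by
  unfold Mmat
  rw [Matrix.sum_apply]
  exact Finset.sum_nonneg fun k _ => Qpow_nonneg' hQ k i j

lemma M_pos' (hQ : IsProxMat Q) (hE : EnriquesAxioms Q) (hn : 1 ≤ n) (i : Fin n) :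
    1 ≤ Mmat Q ⟨0, hn⟩ i := by
  have base : ∀ i : Fin n, i.val = 0 → 1 ≤ Mmat Q ⟨0, hn⟩ i := by
    intro i h0
    have : i = ⟨0, hn⟩ := by ext; exact h0
    subst this
    unfold Mmat
    rw [Matrix.sum_apply]
    calc (1:ℤ) = ∑ k ∈ Finset.range 1, (Q ^ k) ⟨0,hn⟩ ⟨0,hn⟩ := by simp
      _ ≤ _ := Finset.sum_le_sum_of_subset_of_nonneg
          (Finset.range_subset_range.mpr hn) (fun k _ _ => Qpow_nonneg' hQ k _ _)
  suffices h : ∀ m : ℕ, ∀ i : Fin n, i.val ≤ m → 1 ≤ Mmat Q ⟨0, hn⟩ i from h i.val i le_rfl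
  intro m
  induction m with
  | zero => intro i hi; exact base i (Nat.le_zero.mp hi)
  | succ m ih =>
    intro i hi
    rcases Nat.eq_zero_or_pos i.val with h0 | h0
    · exact base i h0
    · obtain ⟨p, hp, hQp⟩ := hE.1 i h0
      have hM : Mmat Q ⟨0, hn⟩ i
          = (Mmat Q * Q) ⟨0, hn⟩ i + (1 : Matrix (Fin n) (Fin n) ℤ) ⟨0,hn⟩ i := by
        rw [M_mul_Q' hQ]; simp
      have h1 : (1 : Matrix (Fin n) (Fin n) ℤ) ⟨0,hn⟩ i = 0 := by
        rw [Matrix.one_apply]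
        have : (⟨0, hn⟩ : Fin n) ≠ i := by
          intro e; rw [← e] at h0; simp at h0
        simp [this]
      rw [hM, h1, add_zero, Matrix.mul_apply]
      have hterm : 1 ≤ Mmat Q ⟨0,hn⟩ p * Q p i := by
        rw [hQp, mul_one]
        exact ih p (by have := Fin.lt_def.mp hp; omega)
      calc (1:ℤ) ≤ Mmat Q ⟨0,hn⟩ p * Q p i := hterm
        _ ≤ ∑ l, Mmat Q ⟨0,hn⟩ l * Q l i := by
            apply Finset.single_le_sum (f := fun l => Mmat Q ⟨0,hn⟩ l * Q l i)
              (fun l _ => mul_nonneg (M_nonneg' hQ _ _) (Q_nonneg' hQ _ _)) (Finset.mem_univ p)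

lemma S_apply' (i j : Fin n) :
    Smat Q i j = Q i j + Q j i - (if i = j then 1 else 0) - ∑ k, Q i k * Q j k := by
  unfold Smat
  simp only [Matrix.neg_apply, Matrix.mul_apply, Matrix.transpose_apply, Matrix.sub_apply,
    Matrix.one_apply]
  have hterm : ∀ k : Fin n,
      ((if i = k then (1:ℤ) else 0) - Q i k) * ((if j = k then 1 else 0) - Q j k)
      = (if i = k then (if j = k then (1:ℤ) else 0) else 0)
        - (if i = k then Q j k else 0) - (if j = k then Q i k else 0) + Q i k * Q j k := by
    intro k; split <;> split <;> ring
  rw [Finset.sum_congr rfl fun k _ => hterm k]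
  rw [Finset.sum_add_distrib, Finset.sum_sub_distrib, Finset.sum_sub_distrib]
  simp only [Finset.sum_ite_eq, Finset.mem_univ, if_true]
  rw [show (if j = i then (1:ℤ) else 0) = (if i = j then 1 else 0) by simp [eq_comm]]
  ring

lemma sum_prod_eq_card' (hQ : IsProxMat Q) (i j : Fin n) :
    ∑ k, Q i k * Q j k
      = ((Finset.univ.filter fun k => Q i k = 1 ∧ Q j k = 1).card : ℤ) := by
  rw [Finset.card_filter]
  push_cast
  apply Finset.sum_congr rfl
  intro k _
  rcases hQ.2 i k with h1 | h1 <;> rcases hQ.2 j k with h2 | h2 <;>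
    simp [h1, h2]

lemma S_offdiag_nonneg' (hQ : IsProxMat Q) (hE : EnriquesAxioms Q) {i j : Fin n}
    (hij : i ≠ j) : 0 ≤ Smat Q i j := by
  have key : ∀ i j : Fin n, i < j → 0 ≤ Smat Q i j := by
    intro i j hlt
    rw [S_apply', if_neg (ne_of_lt hlt), sum_prod_eq_card' hQ]
    have hQji : Q j i = 0 := hQ.1 j i (fun h => absurd (lt_trans hlt h) (lt_irrefl _))
    set s := Finset.univ.filter fun k => Q i k = 1 ∧ Q j k = 1 with hs
    have hcard : s.card ≤ 1 := by
      apply Finset.card_le_one.mpr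
      intro a ha b hb
      simp only [hs, Finset.mem_filter] at ha hb
      exact hE.2.2.2 i j hlt a b ha.2.1 ha.2.2 hb.2.1 hb.2.2
    rcases Nat.eq_zero_or_pos s.card with h0 | h1
    · rw [h0]
      have := Q_nonneg' hQ i j
      push_cast
      omega
    · obtain ⟨k, hk⟩ := Finset.card_pos.mp h1
      simp only [hs, Finset.mem_filter] at hk
      have hQij : Q i j = 1 := hE.2.2.1 i j k hlt hk.2.1 hk.2.2
      rw [hQij, hQji]
      have : s.card = 1 := le_antisymm hcard h1
      rw [this]
      norm_num
  have hsym : Smat Q i j = Smat Q j i := by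
    rw [S_apply', S_apply']
    have : ∀ k, Q i k * Q j k = Q j k * Q i k := fun k => mul_comm _ _
    rw [Finset.sum_congr rfl fun k _ => this k]
    by_cases h : i = j <;> simp [h, eq_comm] <;> ring
  rcases lt_or_gt_of_ne hij with h | h
  · exact key i j h
  · rw [hsym]; exact key j i h

lemma two_dvd_T_num' (hε : IsBranchVec Q ε) (i j : Fin n) :
    2 ∣ (2 - ε i) * (2 - ε j) * Smat Q i j := by
  rcases hε.1 i with hi | hi
  · rw [hi]; exact ⟨(2 - ε j) * Smat Q i j, by ring⟩
  · rcases hε.1 j with hj | hj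
    · rw [hj]
      have : (2 - ε i) * (2 - 0) * Smat Q i j = 2 * ((2 - ε i) * Smat Q i j) := by ring
      rw [this]; exact Dvd.intro _ rfl
    · obtain ⟨c, hc⟩ := hε.2 i j hi hj
      rw [hi, hj]
      exact ⟨c, by rw [hc]; ring⟩

lemma two_mul_Tmat' (hε : IsBranchVec Q ε) (i j : Fin n) :
    2 * Tmat Q ε i j = (2 - ε i) * (2 - ε j) * Smat Q i j := by
  have := two_dvd_T_num' hε i j
  unfold Tmat
  omega

lemma T_offdiag_nonneg' (hQ : IsProxMat Q) (hE : EnriquesAxioms Q) (hε : IsBranchVec Q ε)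
    {i j : Fin n} (hij : i ≠ j) : 0 ≤ Tmat Q ε i j := by
  have h2 := two_mul_Tmat' hε i j
  have hS := S_offdiag_nonneg' hQ hE hij
  have hi : 0 ≤ 2 - ε i := by rcases hε.1 i with h | h <;> omega
  have hj : 0 ≤ 2 - ε j := by rcases hε.1 j with h | h <;> omega
  have hnum : 0 ≤ (2 - ε i) * (2 - ε j) * Smat Q i j :=
    mul_nonneg (mul_nonneg hi hj) hS
  linarith

lemma T_mulVec_fiber' (hQ : IsProxMat Q) (hE : EnriquesAxioms Q) (hε : IsBranchVec Q ε)
    (hn : 1 ≤ n) (k : Fin n) :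
    (Tmat Q ε *ᵥ fiberVec Q ε ⟨0, hn⟩) k ≤ 0 := by
  set c : Fin n := ⟨0, hn⟩ with hc
  have key : 2 * (Tmat Q ε *ᵥ fiberVec Q ε c) k
      = 2 * (2 - ε k) * ∑ j, Smat Q k j * Mmat Q c j := by
    rw [Matrix.mulVec, dotProduct, Finset.mul_sum, Finset.mul_sum]
    apply Finset.sum_congr rfl
    intro j _
    rw [← mul_assoc, two_mul_Tmat' hε k j]
    unfold fiberVec
    have h2 : (2 - ε j) * (1 + ε j) = 2 := by rcases hε.1 j with h | h <;> rw [h] <;> ring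
    linear_combination (2 - ε k) * Smat Q k j * Mmat Q c j * h2
  have hSM : ∑ j, Smat Q k j * Mmat Q c j = Q k c - (if k = c then 1 else 0) := by
    have := congrFun (congrFun (S_mul_Mt' hQ) k) c
    simp only [Matrix.mul_apply, Matrix.transpose_apply, Matrix.neg_apply, Matrix.sub_apply,
      Matrix.one_apply] at this
    rw [this]
    split <;> ring
  have hQkc : Q k c = 0 := by
    apply hQ.1
    intro h
    have := Fin.lt_def.mp h
    simp [hc] at this
  rw [hSM, hQkc] at key
  have hk2 : 0 ≤ 2 - ε k := by rcases hε.1 k with h | h <;> omega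
  have : 2 * (Tmat Q ε *ᵥ fiberVec Q ε c) k ≤ 0 := by
    rw [key]
    split
    · linarith
    · simp
  omega

lemma fiber_pos' (hQ : IsProxMat Q) (hE : EnriquesAxioms Q) (hε : IsBranchVec Q ε)
    (hn : 1 ≤ n) (i : Fin n) : 1 ≤ fiberVec Q ε ⟨0, hn⟩ i := by
  unfold fiberVec
  have h1 : 1 ≤ 1 + ε i := by rcases hε.1 i with h | h <;> omega
  have h2 := M_pos' hQ hE hn i
  nlinarith

lemma mulVec_mono_at' {T : Matrix (Fin n) (Fin n) ℤ}
    (hT : ∀ i j : Fin n, i ≠ j → 0 ≤ T i j) (z w : Fin n → ℤ) (k : Fin n)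
    (hk : w k = z k) (hle : ∀ j, w j ≤ z j) : (T *ᵥ w) k ≤ (T *ᵥ z) k := by
  rw [Matrix.mulVec, Matrix.mulVec, dotProduct, dotProduct]
  apply Finset.sum_le_sum
  intro j _
  by_cases h : j = k
  · subst h; rw [hk]
  · exact mul_le_mul_of_nonneg_left (hle j) (hT k j fun e => h e.symm)

lemma min_mem_C' (hQ : IsProxMat Q) (hE : EnriquesAxioms Q) (hε : IsBranchVec Q ε)
    (z₁ z₂ : Fin n → ℤ)
    (h₁ : (∀ i, 1 ≤ z₁ i) ∧ ∀ k, (Tmat Q ε *ᵥ z₁) k ≤ 0)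
    (h₂ : (∀ i, 1 ≤ z₂ i) ∧ ∀ k, (Tmat Q ε *ᵥ z₂) k ≤ 0) :
    (∀ i, 1 ≤ min (z₁ i) (z₂ i)) ∧
      ∀ k, (Tmat Q ε *ᵥ fun i => min (z₁ i) (z₂ i)) k ≤ 0 := by
  constructor
  · intro i; exact le_min (h₁.1 i) (h₂.1 i)
  · intro k
    have hT := fun i j (h : i ≠ j) => T_offdiag_nonneg' hQ hE hε (i := i) (j := j) h
    rcases le_total (z₁ k) (z₂ k) with h | h
    · calc (Tmat Q ε *ᵥ fun i => min (z₁ i) (z₂ i)) k ≤ (Tmat Q ε *ᵥ z₁) k :=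
          mulVec_mono_at' hT z₁ _ k (min_eq_left h) (fun j => min_le_left _ _)
        _ ≤ 0 := h₁.2 k
    · calc (Tmat Q ε *ᵥ fun i => min (z₁ i) (z₂ i)) k ≤ (Tmat Q ε *ᵥ z₂) k :=
          mulVec_mono_at' hT z₂ _ k (min_eq_right h) (fun j => min_le_right _ _)
        _ ≤ 0 := h₂.2 k

end FundCycleAux

/-- For a proximity matrix satisfying the Enriques axioms and a
branch vector `ε`, the set `C = {z : z_i ≥ 1 ∀i, (Tz)_k ≤ 0 ∀k}` contains the
fiber vector, is closed under componentwise minimum, and has a unique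
componentwise-least element (existence and uniqueness of the fundamental cycle). -/
theorem fundamental_cycle_exists_unique
    (n : ℕ) (hn : 1 ≤ n) (Q : Matrix (Fin n) (Fin n) ℤ)
    (hQ : IsProxMat Q) (hE : EnriquesAxioms Q)
    (ε : Fin n → ℤ) (hε : IsBranchVec Q ε) :
    fiberVec Q ε ⟨0, hn⟩ ∈
      {z : Fin n → ℤ | (∀ i, 1 ≤ z i) ∧ ∀ k, (Tmat Q ε *ᵥ z) k ≤ 0} ∧
    (∀ z₁ ∈ {z : Fin n → ℤ | (∀ i, 1 ≤ z i) ∧ ∀ k, (Tmat Q ε *ᵥ z) k ≤ 0},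
      ∀ z₂ ∈ {z : Fin n → ℤ | (∀ i, 1 ≤ z i) ∧ ∀ k, (Tmat Q ε *ᵥ z) k ≤ 0},
        (fun i => min (z₁ i) (z₂ i)) ∈
          {z : Fin n → ℤ | (∀ i, 1 ≤ z i) ∧ ∀ k, (Tmat Q ε *ᵥ z) k ≤ 0}) ∧
    (∃! z : Fin n → ℤ,
      z ∈ {z : Fin n → ℤ | (∀ i, 1 ≤ z i) ∧ ∀ k, (Tmat Q ε *ᵥ z) k ≤ 0} ∧
      ∀ w ∈ {z : Fin n → ℤ | (∀ i, 1 ≤ z i) ∧ ∀ k, (Tmat Q ε *ᵥ z) k ≤ 0}, z ≤ w) := by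
  classical
  set C : Set (Fin n → ℤ) :=
    {z : Fin n → ℤ | (∀ i, 1 ≤ z i) ∧ ∀ k, (Tmat Q ε *ᵥ z) k ≤ 0} with hC
  have hfC : fiberVec Q ε ⟨0, hn⟩ ∈ C :=
    ⟨fiber_pos' hQ hE hε hn, T_mulVec_fiber' hQ hE hε hn⟩
  have hmin : ∀ z₁ ∈ C, ∀ z₂ ∈ C, (fun i => min (z₁ i) (z₂ i)) ∈ C := by
    intro z₁ h₁ z₂ h₂
    exact min_mem_C' hQ hE hε z₁ z₂ h₁ h₂
  refine ⟨hfC, hmin, ?_⟩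
  -- coordinate-wise least values are attained
  have H : ∀ i : Fin n, ∃ v : Fin n → ℤ, v ∈ C ∧ ∀ w ∈ C, v i ≤ w i := by
    intro i
    obtain ⟨lb, ⟨v, hv, hvi⟩, hleast⟩ :=
      Int.exists_least_of_bdd (P := fun z => ∃ v ∈ C, v i = z)
        ⟨1, fun z ⟨v, hv, hvi⟩ => hvi ▸ hv.1 i⟩
        ⟨fiberVec Q ε ⟨0, hn⟩ i, fiberVec Q ε ⟨0, hn⟩, hfC, rfl⟩
    exact ⟨v, hv, fun w hw => hvi ▸ hleast (w i) ⟨w, hw, rfl⟩⟩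
  choose g hg₁ hg₂ using H
  -- finite componentwise minima of members of C stay in C
  have hfold : ∀ (s : Finset (Fin n)) (hs : s.Nonempty),
      (fun j => s.inf' hs fun i => g i j) ∈ C := by
    intro s hs
    induction hs using Finset.Nonempty.cons_induction with
    | singleton a => simpa using hg₁ a
    | cons a s h hs ih =>
      have : (fun j => (Finset.cons a s h).inf' (Finset.cons_nonempty h) fun i => g i j)
          = fun j => min (g a j) (s.inf' hs fun i => g i j) := by
        funext j
        rw [Finset.inf'_cons]
      rw [this]
      exact hmin _ (hg₁ a) _ ih
  have hne : (Finset.univ : Finset (Fin n)).Nonempty := ⟨⟨0, hn⟩, Finset.mem_univ _⟩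
  set z₀ : Fin n → ℤ := fun j => Finset.univ.inf' hne fun i => g i j with hz₀
  have hz₀C : z₀ ∈ C := hfold Finset.univ hne
  have hz₀least : ∀ w ∈ C, z₀ ≤ w := by
    intro w hw j
    calc z₀ j ≤ g j j := Finset.inf'_le _ (Finset.mem_univ j)
      _ ≤ w j := hg₂ j w hw
  refine ⟨z₀, ⟨hz₀C, hz₀least⟩, ?_⟩
  rintro z' ⟨hz'C, hz'least⟩
  exact le_antisymm (hz'least z₀ hz₀C) (hz₀least z' hz'C)
end

section
/- Let Q be a proximity matrix and ε a branch vector for Q, with T the associated intersection matrix and f the fiber vector. Then fᵀ T f = −2, (T f)_1 = ε_1 − 2, and (T f)_k = 0 for every k > 1. (These are the numerical properties of the fiber cycle F = π*(E_1*) of the canonical resolution of a double point: F² = −2 = −mult_p(X_0), F·F_1 = −2 + ε_1, and F·F_i = 0 for i > 1.) -/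
open Matrix Finset

lemma prox_pow_zero {n : ℕ} {Q : Matrix (Fin n) (Fin n) ℤ} (hQ : IsProxMat Q) :
    ∀ k, ∀ i j : Fin n, ¬ (i.val + k ≤ j.val) → (Q ^ k) i j = 0 := by
  intro k
  induction k with
  | zero =>
    intro i j h
    simp only [pow_zero, Matrix.one_apply]
    rw [if_neg]
    intro hij
    exact h (le_of_eq (by rw [hij]; omega))
  | succ k ih =>
    intro i j h
    rw [pow_succ, Matrix.mul_apply]
    apply Finset.sum_eq_zero
    intro l _
    by_cases h1 : i.val + k ≤ l.val
    · have hlj : ¬ l < j := by rw [Fin.lt_def]; omega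
      rw [hQ.1 l j hlj, mul_zero]
    · rw [ih i l h1, zero_mul]

lemma prox_pow_n {n : ℕ} {Q : Matrix (Fin n) (Fin n) ℤ} (hQ : IsProxMat Q) :
    Q ^ n = 0 := by
  ext i j
  rw [prox_pow_zero hQ n i j (by have := j.isLt; omega)]
  rfl

lemma NM_one {n : ℕ} {Q : Matrix (Fin n) (Fin n) ℤ} (hQ : IsProxMat Q) :
    (1 - Q) * Mmat Q = 1 := by
  have h := mul_geom_sum (x := Q) n
  rw [prox_pow_n hQ] at h
  have : (1 - Q) * Mmat Q = -((Q - 1) * Mmat Q) := by rw [← neg_sub Q 1, neg_mul]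
  rw [this, Mmat, h]
  simp

lemma MN_one {n : ℕ} {Q : Matrix (Fin n) (Fin n) ℤ} (hQ : IsProxMat Q) :
    Mmat Q * (1 - Q) = 1 := by
  have h := geom_sum_mul (x := Q) n
  rw [prox_pow_n hQ] at h
  have : Mmat Q * (1 - Q) = -(Mmat Q * (Q - 1)) := by rw [← neg_sub Q 1, mul_neg]
  rw [this, Mmat, h]
  simp

/-- Numerical properties of the fiber cycle `F = π*(E₁*)` of the
canonical resolution of a double point: `F² = fᵀ T f = -2`, `F·F₁ = (Tf)_1 = ε_1 - 2`,
and `F·F_k = (Tf)_k = 0` for `k > 1`. -/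
theorem fiber_cycle_numerics
    (n : ℕ) (hn : 1 ≤ n) (Q : Matrix (Fin n) (Fin n) ℤ)
    (hQ : IsProxMat Q) (ε : Fin n → ℤ) (hε : IsBranchVec Q ε) :
    fiberVec Q ε ⟨0, hn⟩ ⬝ᵥ (Tmat Q ε *ᵥ fiberVec Q ε ⟨0, hn⟩) = -2 ∧
    (Tmat Q ε *ᵥ fiberVec Q ε ⟨0, hn⟩) ⟨0, hn⟩ = ε ⟨0, hn⟩ - 2 ∧
    ∀ k : Fin n, k ≠ ⟨0, hn⟩ → (Tmat Q ε *ᵥ fiberVec Q ε ⟨0, hn⟩) k = 0 := by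
  set i0 : Fin n := ⟨0, hn⟩ with hi0
  -- key matrix identity S * Mᵀ = -(1 - Q)
  have key : Smat Q * (Mmat Q)ᵀ = -(1 - Q) := by
    have h1 : (1 - Q)ᵀ * (Mmat Q)ᵀ = 1 := by
      rw [← Matrix.transpose_mul, MN_one hQ, Matrix.transpose_one]
    rw [Smat, neg_mul, Matrix.mul_assoc, h1, Matrix.mul_one]
  -- entrywise: T k j * (1 + ε j) = (2 - ε k) * S k j
  have hA : ∀ k j : Fin n, Tmat Q ε k j * (1 + ε j) = (2 - ε k) * Smat Q k j := by
    intro k j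
    have hd : 2 ∣ (2 - ε k) * (2 - ε j) * Smat Q k j := by
      rcases hε.1 k with h1 | h1 <;> rcases hε.1 j with h2 | h2 <;> rw [h1, h2]
      · exact ⟨2 * Smat Q k j, by ring⟩
      · exact ⟨Smat Q k j, by ring⟩
      · exact ⟨Smat Q k j, by ring⟩
      · have := hε.2 k j h1 h2
        obtain ⟨c, hc⟩ := this
        exact ⟨c, by rw [← hc]; ring⟩
    have h2T : 2 * Tmat Q ε k j = (2 - ε k) * (2 - ε j) * Smat Q k j :=
      Int.mul_ediv_cancel' hd
    have he : (2 - ε j) * (1 + ε j) = 2 := by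
      rcases hε.1 j with h | h <;> rw [h] <;> ring
    apply mul_left_cancel₀ (two_ne_zero (α := ℤ))
    calc 2 * (Tmat Q ε k j * (1 + ε j)) = (2 * Tmat Q ε k j) * (1 + ε j) := by ring
      _ = ((2 - ε k) * (2 - ε j) * Smat Q k j) * (1 + ε j) := by rw [h2T]
      _ = (2 - ε k) * Smat Q k j * ((2 - ε j) * (1 + ε j)) := by ring
      _ = 2 * ((2 - ε k) * Smat Q k j) := by rw [he]; ring
  -- (T f)_k = (2 - ε k) * (S Mᵀ)_{k, i0}
  have hB : ∀ k : Fin n, (Tmat Q ε *ᵥ fiberVec Q ε i0) k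
      = (2 - ε k) * (Smat Q * (Mmat Q)ᵀ) k i0 := by
    intro k
    simp only [Matrix.mulVec, dotProduct, fiberVec, Matrix.mul_apply,
      Matrix.transpose_apply]
    rw [Finset.mul_sum]
    apply Finset.sum_congr rfl
    intro j _
    calc Tmat Q ε k j * ((1 + ε j) * Mmat Q i0 j)
        = (Tmat Q ε k j * (1 + ε j)) * Mmat Q i0 j := by ring
      _ = ((2 - ε k) * Smat Q k j) * Mmat Q i0 j := by rw [hA k j]
      _ = (2 - ε k) * (Smat Q k j * Mmat Q i0 j) := by ring
  -- evaluate the entry of -(1-Q)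
  have hC : ∀ k : Fin n, (Smat Q * (Mmat Q)ᵀ) k i0 = -(if k = i0 then 1 else 0) := by
    intro k
    rw [key]
    have hQk : Q k i0 = 0 := hQ.1 k i0 (by rw [Fin.lt_def]; simp [hi0])
    simp [Matrix.sub_apply, Matrix.one_apply, hQk]
  have hTf : ∀ k : Fin n, (Tmat Q ε *ᵥ fiberVec Q ε i0) k
      = (2 - ε k) * (-(if k = i0 then 1 else 0)) := by
    intro k; rw [hB k, hC k]
  have hTf0 : (Tmat Q ε *ᵥ fiberVec Q ε i0) i0 = ε i0 - 2 := by
    rw [hTf i0, if_pos rfl]; ring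
  have hTfk : ∀ k : Fin n, k ≠ i0 → (Tmat Q ε *ᵥ fiberVec Q ε i0) k = 0 := by
    intro k hk; rw [hTf k, if_neg hk]; ring
  refine ⟨?_, hTf0, hTfk⟩
  -- m_{00} = 1
  have hm : Mmat Q i0 i0 = 1 := by
    rw [Mmat, Matrix.sum_apply]
    rw [Finset.sum_eq_single 0]
    · simp [Matrix.one_apply]
    · intro k hk hk0
      exact prox_pow_zero hQ k i0 i0 (by simp [hi0]; omega)
    · intro h
      exact absurd (Finset.mem_range.mpr (by omega)) h
  -- dot product
  rw [dotProduct]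
  rw [Finset.sum_eq_single i0]
  · rw [hTf0]
    simp only [fiberVec, hm, mul_one]
    rcases hε.1 i0 with h | h <;> rw [h] <;> ring
  · intro k _ hk
    rw [hTfk k hk, mul_zero]
  · intro h
    exact absurd (Finset.mem_univ i0) h
end

section
/- Let Q be a proximity matrix satisfying the Enriques axioms (E1)–(E4) and ε a branch vector for Q; let z be the fundamental cycle and f the fiber vector. Then z ≤ f componentwise, and z ≠ f if and only if there exists j > 1 such that ε_j = 0, q_j is infinitely near of order one to q_1, and m_{1i} + m_{ji} is even for every i with ε_i = 0. Moreover, in that case z_i = (1 + ε_i)(m_{1i} + m_{ji})/2 for every i. (Geometrically: the fundamental cycle Z of the canonical resolution of a double point equals the fiber cycle F = π*(E_1*) unless the stated condition holds, in which case Z = π*(E_1* + E_j*)/2.) -/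
open Matrix Finset

section FCaux

variable {n : ℕ} {Q : Matrix (Fin n) (Fin n) ℤ} {ε : Fin n → ℤ}

lemma FC_pow_zero (h : ∀ i j : Fin n, ¬ i < j → Q i j = 0) :
    ∀ (k : ℕ) (i j : Fin n), (j : ℕ) < (i : ℕ) + k → (Q ^ k) i j = 0 := by
  intro k
  induction k with
  | zero =>
    intro i j hij
    have hne : i ≠ j := by
      intro hh; subst hh; omega
    rw [pow_zero]
    exact Matrix.one_apply_ne hne
  | succ k IH =>
    intro i j hij
    rw [pow_succ, Matrix.mul_apply]
    apply Finset.sum_eq_zero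
    intro t _
    by_cases ht : (t : ℕ) < (i : ℕ) + k
    · rw [IH i t ht, zero_mul]
    · have hnt : ¬ t < j := by
        intro hh
        have : (t : ℕ) < (j : ℕ) := hh
        omega
      rw [h t j hnt, mul_zero]

lemma FC_pow_n (h : ∀ i j : Fin n, ¬ i < j → Q i j = 0) : Q ^ n = 0 := by
  ext i j
  rw [FC_pow_zero h n i j (by have := j.isLt; omega)]
  rfl

lemma FC_NM (h : ∀ i j : Fin n, ¬ i < j → Q i j = 0) : (1 - Q) * Mmat Q = 1 := by
  have h2 : (Q - 1) * ∑ i ∈ Finset.range n, Q ^ i = Q ^ n - 1 := mul_geom_sum Q n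
  have h3 : (1 - Q) * Mmat Q = -((Q - 1) * ∑ i ∈ Finset.range n, Q ^ i) := by
    rw [Mmat]; rw [← neg_sub Q 1, neg_mul]
  rw [h3, h2, FC_pow_n h, zero_sub, neg_neg]

lemma FC_MN (h : ∀ i j : Fin n, ¬ i < j → Q i j = 0) : Mmat Q * (1 - Q) = 1 := by
  have h2 : (∑ i ∈ Finset.range n, Q ^ i) * (Q - 1) = Q ^ n - 1 := geom_sum_mul Q n
  have h3 : Mmat Q * (1 - Q) = -((∑ i ∈ Finset.range n, Q ^ i) * (Q - 1)) := by
    rw [Mmat, ← neg_sub Q 1, mul_neg]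
  rw [h3, h2, FC_pow_n h, zero_sub, neg_neg]

lemma FC_pow_nonneg (h01 : ∀ i j : Fin n, Q i j = 0 ∨ Q i j = 1) :
    ∀ (k : ℕ) (i j : Fin n), 0 ≤ (Q ^ k) i j := by
  intro k
  induction k with
  | zero =>
    intro i j
    rw [pow_zero, Matrix.one_apply]
    split <;> norm_num
  | succ k IH =>
    intro i j
    rw [pow_succ, Matrix.mul_apply]
    apply Finset.sum_nonneg
    intro t _
    apply mul_nonneg (IH i t)
    rcases h01 t j with h | h <;> rw [h] <;> norm_num

lemma FC_Q_nonneg (h01 : ∀ i j : Fin n, Q i j = 0 ∨ Q i j = 1) (i j : Fin n) :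
    0 ≤ Q i j := by
  rcases h01 i j with h | h <;> rw [h] <;> norm_num

lemma FC_M_nonneg (h01 : ∀ i j : Fin n, Q i j = 0 ∨ Q i j = 1) (i j : Fin n) :
    0 ≤ Mmat Q i j := by
  rw [Mmat, Matrix.sum_apply]
  exact Finset.sum_nonneg fun k _ => FC_pow_nonneg h01 k i j

lemma FC_M_diag (hn : 0 < n) (h : ∀ i j : Fin n, ¬ i < j → Q i j = 0) (i : Fin n) :
    Mmat Q i i = 1 := by
  rw [Mmat, Matrix.sum_apply]
  rw [Finset.sum_eq_single 0]
  · rw [pow_zero, Matrix.one_apply_eq]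
  · intro k _ hk
    exact FC_pow_zero h k i i (by omega)
  · intro hh
    exact absurd (Finset.mem_range.mpr hn) hh

lemma FC_M_lower (h : ∀ i j : Fin n, ¬ i < j → Q i j = 0) {i j : Fin n}
    (hij : (j : ℕ) < (i : ℕ)) : Mmat Q i j = 0 := by
  rw [Mmat, Matrix.sum_apply]
  exact Finset.sum_eq_zero fun k _ => FC_pow_zero h k i j (by omega)

lemma FC_Mrec1 (h : ∀ i j : Fin n, ¬ i < j → Q i j = 0) (i j : Fin n) :
    Mmat Q i j = (if i = j then 1 else 0) + ∑ s, Mmat Q i s * Q s j := by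
  have h1 : Mmat Q = 1 + Mmat Q * Q := by
    have h2 := FC_MN h
    rw [mul_sub, mul_one] at h2
    rw [← h2]; rw [sub_add_cancel]
  calc Mmat Q i j = (1 + Mmat Q * Q) i j := by rw [← h1]
  _ = (if i = j then 1 else 0) + ∑ s, Mmat Q i s * Q s j := by
      rw [Matrix.add_apply, Matrix.mul_apply, Matrix.one_apply]

lemma FC_Mrec2 (h : ∀ i j : Fin n, ¬ i < j → Q i j = 0) (i j : Fin n) :
    Mmat Q i j = (if i = j then 1 else 0) + ∑ s, Q i s * Mmat Q s j := by
  have h1 : Mmat Q = 1 + Q * Mmat Q := by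
    have h2 := FC_NM h
    rw [sub_mul, one_mul] at h2
    rw [← h2]; rw [sub_add_cancel]
  calc Mmat Q i j = (1 + Q * Mmat Q) i j := by rw [← h1]
  _ = _ := by rw [Matrix.add_apply, Matrix.mul_apply, Matrix.one_apply]

lemma FC_M0_pos (hn : 0 < n) (hQ : IsProxMat Q)
    (hE1 : ∀ j : Fin n, 0 < j.val → ∃ i : Fin n, i < j ∧ Q i j = 1) :
    ∀ i : Fin n, 1 ≤ Mmat Q ⟨0, hn⟩ i := by
  have key : ∀ v : ℕ, ∀ i : Fin n, i.val = v → 1 ≤ Mmat Q ⟨0, hn⟩ i := by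
    intro v
    induction v using Nat.strong_induction_on with
    | _ v IH =>
      intro i hi
      by_cases h0 : i.val = 0
      · have hi0 : i = ⟨0, hn⟩ := Fin.ext h0
        rw [hi0, FC_M_diag hn hQ.1]
      · obtain ⟨k, hki, hQk⟩ := hE1 i (Nat.pos_of_ne_zero h0)
        have h1 : 1 ≤ Mmat Q ⟨0, hn⟩ k := IH k.val (hi ▸ Fin.lt_def.mp hki) k rfl
        have h2 : Mmat Q ⟨0, hn⟩ k * Q k i ≤ ∑ s, Mmat Q ⟨0, hn⟩ s * Q s i :=
          Finset.single_le_sum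
            (fun s _ => mul_nonneg (FC_M_nonneg hQ.2 _ _) (FC_Q_nonneg hQ.2 _ _))
            (Finset.mem_univ k)
        rw [hQk, mul_one] at h2
        have h3 : (0:ℤ) ≤ if (⟨0, hn⟩ : Fin n) = i then 1 else 0 := by
          split <;> norm_num
        rw [FC_Mrec1 hQ.1]
        linarith
  intro i; exact key i.val i rfl

end FCaux

section FCaux2

variable {n : ℕ} {Q : Matrix (Fin n) (Fin n) ℤ} {ε : Fin n → ℤ}

lemma FC_dvd (hε : IsBranchVec Q ε) (k i : Fin n) :
    2 ∣ (2 - ε k) * (2 - ε i) * Smat Q k i := by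
  rcases hε.1 k with hk | hk
  · exact ⟨(2 - ε i) * Smat Q k i, by rw [hk]; ring⟩
  rcases hε.1 i with hi | hi
  · exact ⟨(2 - ε k) * Smat Q k i, by rw [hi]; ring⟩
  · obtain ⟨c, hc⟩ := hε.2 k i hk hi
    exact ⟨c, by rw [hk, hi, hc]; ring⟩

lemma FC_T2 (hε : IsBranchVec Q ε) (k i : Fin n) :
    2 * Tmat Q ε k i = (2 - ε k) * (2 - ε i) * Smat Q k i :=
  Int.mul_ediv_cancel' (FC_dvd hε k i)

lemma FC_epos (hε : IsBranchVec Q ε) (k : Fin n) : (0:ℤ) < 2 - ε k := by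
  rcases hε.1 k with h | h <;> rw [h] <;> norm_num

lemma FC_TS (hε : IsBranchVec Q ε) (v : Fin n → ℤ) :
    (∀ k, (Tmat Q ε *ᵥ v) k ≤ 0) ↔
      (∀ k, (Smat Q *ᵥ fun i => (2 - ε i) * v i) k ≤ 0) := by
  have hmain : ∀ k, 2 * (Tmat Q ε *ᵥ v) k
      = (2 - ε k) * (Smat Q *ᵥ fun i => (2 - ε i) * v i) k := by
    intro k
    simp only [Matrix.mulVec, dotProduct]
    rw [Finset.mul_sum, Finset.mul_sum]
    apply Finset.sum_congr rfl
    intro i _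
    calc 2 * (Tmat Q ε k i * v i) = (2 * Tmat Q ε k i) * v i := by ring
    _ = ((2 - ε k) * (2 - ε i) * Smat Q k i) * v i := by rw [FC_T2 hε k i]
    _ = (2 - ε k) * (Smat Q k i * ((2 - ε i) * v i)) := by ring
  constructor
  · intro h k
    have h1 : (2 - ε k) * (Smat Q *ᵥ fun i => (2 - ε i) * v i) k ≤ (2 - ε k) * 0 := by
      rw [mul_zero, ← hmain k]
      linarith [h k]
    exact le_of_mul_le_mul_left h1 (FC_epos hε k)
  · intro h k
    have h1 : 2 * (Tmat Q ε *ᵥ v) k ≤ 0 := by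
      rw [hmain k]
      exact mul_nonpos_of_nonneg_of_nonpos (le_of_lt (FC_epos hε k)) (h k)
    linarith

lemma FC_vecNTMT (v : Fin n → ℤ) (h : ∀ i j : Fin n, ¬ i < j → Q i j = 0) :
    (1 - Q)ᵀ *ᵥ ((Mmat Q)ᵀ *ᵥ v) = v := by
  rw [Matrix.mulVec_mulVec, ← Matrix.transpose_mul, FC_MN h, Matrix.transpose_one,
    Matrix.one_mulVec]

lemma FC_vecMTNT (v : Fin n → ℤ) (h : ∀ i j : Fin n, ¬ i < j → Q i j = 0) :
    (Mmat Q)ᵀ *ᵥ ((1 - Q)ᵀ *ᵥ v) = v := by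
  rw [Matrix.mulVec_mulVec, ← Matrix.transpose_mul, FC_NM h, Matrix.transpose_one,
    Matrix.one_mulVec]

lemma FC_vecMN (v : Fin n → ℤ) (h : ∀ i j : Fin n, ¬ i < j → Q i j = 0) :
    Mmat Q *ᵥ ((1 - Q) *ᵥ v) = v := by
  rw [Matrix.mulVec_mulVec, FC_MN h, Matrix.one_mulVec]

lemma FC_Smul (x : Fin n → ℤ) :
    Smat Q *ᵥ x = -((1 - Q) *ᵥ ((1 - Q)ᵀ *ᵥ x)) := by
  rw [Smat, Matrix.neg_mulVec, Matrix.mulVec_mulVec]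

lemma FC_feas (hε : IsBranchVec Q ε) (h : ∀ i j : Fin n, ¬ i < j → Q i j = 0)
    (y₀ v : Fin n → ℤ)
    (hvy : ∀ i, (2 - ε i) * v i = ∑ t, y₀ t * Mmat Q t i)
    (hNy : ∀ k, 0 ≤ ((1 - Q) *ᵥ y₀) k) :
    ∀ k, (Tmat Q ε *ᵥ v) k ≤ 0 := by
  apply (FC_TS hε v).mpr
  have hu : (fun i => (2 - ε i) * v i) = (Mmat Q)ᵀ *ᵥ y₀ := by
    funext i
    rw [hvy i]
    simp only [Matrix.mulVec, dotProduct, Matrix.transpose_apply]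
    exact Finset.sum_congr rfl fun t _ => mul_comm _ _
  rw [hu, FC_Smul, FC_vecNTMT y₀ h]
  intro k
  simp only [Pi.neg_apply]
  linarith [hNy k]

end FCaux2

/-- The fundamental cycle `z` of the canonical resolution satisfies
`z ≤ f` (the fiber vector), and `z ≠ f` iff there exists `j > 1` with `ε_j = 0`,
`q_j` infinitely near of order one to `q_1`, and `m_{1i} + m_{ji}` even for every
`i` with `ε_i = 0`; in that case `z_i = (1 + ε_i)(m_{1i} + m_{ji})/2` for all `i`. -/
theorem fundamental_cycle_vs_fiber_cycle
    (n : ℕ) (hn : 1 ≤ n) (Q : Matrix (Fin n) (Fin n) ℤ)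
    (hQ : IsProxMat Q) (hE : EnriquesAxioms Q)
    (ε : Fin n → ℤ) (hε : IsBranchVec Q ε)
    (z : Fin n → ℤ) (hz : IsFundCycle (Tmat Q ε) z) :
    z ≤ fiberVec Q ε ⟨0, hn⟩ ∧
    (z ≠ fiberVec Q ε ⟨0, hn⟩ ↔
      ∃ j : Fin n, j ≠ ⟨0, hn⟩ ∧ ε j = 0 ∧
        (Q ⟨0, hn⟩ j = 1 ∧ ∀ i : Fin n, i ≠ ⟨0, hn⟩ → Q i j = 0) ∧
        (∀ i : Fin n, ε i = 0 → 2 ∣ (Mmat Q ⟨0, hn⟩ i + Mmat Q j i))) ∧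
    (∀ j : Fin n, j ≠ ⟨0, hn⟩ → ε j = 0 →
      (Q ⟨0, hn⟩ j = 1 ∧ ∀ i : Fin n, i ≠ ⟨0, hn⟩ → Q i j = 0) →
      (∀ i : Fin n, ε i = 0 → 2 ∣ (Mmat Q ⟨0, hn⟩ i + Mmat Q j i)) →
      ∀ i : Fin n, z i = (1 + ε i) * (Mmat Q ⟨0, hn⟩ i + Mmat Q j i) / 2) := by
  obtain ⟨hz1, hzT, hzmin⟩ := hz
  set i0 : Fin n := ⟨0, hn⟩ with hi0def
  have hsu := hQ.1
  have h01 := hQ.2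
  have hE1 := hE.1
  have hMpos : ∀ i, 1 ≤ Mmat Q i0 i := FC_M0_pos hn hQ hE1
  have hQcol0 : ∀ k : Fin n, Q k i0 = 0 := by
    intro k
    apply hsu
    intro hlt
    have h1 : (k : ℕ) < (i0 : ℕ) := hlt
    simp [hi0def] at h1
  have hlt_i0 : ∀ j : Fin n, j ≠ i0 → (0:ℕ) < j.val := by
    intro j hj
    exact Nat.pos_of_ne_zero fun h => hj (Fin.ext h)
  have hMcol0 : ∀ k : Fin n, k ≠ i0 → Mmat Q k i0 = 0 := by
    intro k hk
    exact FC_M_lower hsu (by simpa [hi0def] using hlt_i0 k hk)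
  set f := fiberVec Q ε i0 with hfdef
  -- f is feasible
  have hfu : ∀ i, (2 - ε i) * f i = 2 * Mmat Q i0 i := by
    intro i
    rcases hε.1 i with h | h <;>
      (show (2 - ε i) * ((1 + ε i) * Mmat Q i0 i) = _; rw [h]; ring)
  have hf1 : ∀ i, 1 ≤ f i := by
    intro i
    have h1 := hMpos i
    rcases hε.1 i with h | h <;>
      (show 1 ≤ (1 + ε i) * Mmat Q i0 i; rw [h]; linarith)
  have hfT : ∀ k, (Tmat Q ε *ᵥ f) k ≤ 0 := by
    apply FC_feas hε hsu (fun t => if t = i0 then (2:ℤ) else 0) f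
    · intro i
      rw [hfu i, Finset.sum_eq_single i0]
      · rw [if_pos rfl]
      · intro t _ ht; rw [if_neg ht, zero_mul]
      · intro h; exact absurd (Finset.mem_univ i0) h
    · intro k
      have h1 : ((1 - Q) *ᵥ fun t => if t = i0 then (2:ℤ) else 0) k
          = 2 * ((1:Matrix (Fin n) (Fin n) ℤ) - Q) k i0 := by
        simp only [Matrix.mulVec, dotProduct]
        rw [Finset.sum_eq_single i0]
        · rw [if_pos rfl]; ring
        · intro t _ ht; rw [if_neg ht, mul_zero]
        · intro h; exact absurd (Finset.mem_univ i0) h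
      rw [h1, Matrix.sub_apply, hQcol0 k, Matrix.one_apply]
      split <;> norm_num
  have hzf : z ≤ f := hzmin f hf1 hfT
  -- analysis of z
  obtain ⟨u, hu_i⟩ : ∃ u : Fin n → ℤ, ∀ i, u i = (2 - ε i) * z i := ⟨_, fun _ => rfl⟩
  have hufun : u = fun i => (2 - ε i) * z i := funext hu_i
  have hSu : ∀ k, (Smat Q *ᵥ u) k ≤ 0 := by
    have h := (FC_TS hε z).mp hzT
    rw [← hufun] at h
    exact h
  obtain ⟨y, hydef⟩ : ∃ y : Fin n → ℤ, y = (1 - Q)ᵀ *ᵥ u := ⟨_, rfl⟩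
  obtain ⟨c, hcdef⟩ : ∃ c : Fin n → ℤ, c = (1 - Q) *ᵥ y := ⟨_, rfl⟩
  have hSuNy : ∀ k, (Smat Q *ᵥ u) k = - c k := by
    intro k
    rw [FC_Smul, hcdef, hydef]
    simp [Pi.neg_apply]
  have hc0 : ∀ k, 0 ≤ c k := by
    intro k
    have h := hSu k
    rw [hSuNy k] at h
    linarith
  have hyMc : y = Mmat Q *ᵥ c := by
    rw [hcdef]
    exact (FC_vecMN y hsu).symm
  have huMy : u = (Mmat Q)ᵀ *ᵥ y := by
    rw [hydef]
    exact (FC_vecMTNT u hsu).symm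
  have hy_sum : ∀ t, y t = ∑ s, Mmat Q t s * c s := by
    intro t
    rw [hyMc]
    simp [Matrix.mulVec, dotProduct]
  have hu_sum : ∀ i, u i = ∑ t, Mmat Q t i * y t := by
    intro i
    conv_lhs => rw [huMy]
    simp [Matrix.mulVec, dotProduct, Matrix.transpose_apply]
  have hy0 : ∀ t, 0 ≤ y t := by
    intro t
    rw [hy_sum t]
    exact Finset.sum_nonneg fun s _ => mul_nonneg (FC_M_nonneg h01 t s) (hc0 s)
  have hyi0u : y i0 = u i0 := by
    rw [hydef]
    simp only [Matrix.mulVec, dotProduct, Matrix.transpose_apply]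
    rw [Finset.sum_eq_single i0]
    · rw [Matrix.sub_apply, Matrix.one_apply_eq, hQcol0 i0, sub_zero, one_mul]
    · intro t _ ht
      rw [Matrix.sub_apply, Matrix.one_apply_ne ht, hQcol0 t, sub_zero, zero_mul]
    · intro h; exact absurd (Finset.mem_univ i0) h
  have hui0 : u i0 = (2 - ε i0) * z i0 := hu_i i0
  have hu_ge1 : 1 ≤ u i0 := by
    have h1 := hz1 i0
    have h2 := FC_epos hε i0
    rw [hui0]
    nlinarith
  have hyi0_ge1 : 1 ≤ y i0 := by rw [hyi0u]; exact hu_ge1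
  -- if y i0 ≥ 2 then z = f
  have hbig : 2 ≤ y i0 → z = f := by
    intro h2
    apply le_antisymm hzf
    intro i
    have h3 : Mmat Q i0 i * y i0 ≤ ∑ t, Mmat Q t i * y t :=
      Finset.single_le_sum
        (fun t _ => mul_nonneg (FC_M_nonneg h01 t i) (hy0 t)) (Finset.mem_univ i0)
    have h4 : 2 * Mmat Q i0 i ≤ u i := by
      rw [hu_sum i]
      nlinarith [hMpos i]
    have h6 : (2 - ε i) * f i ≤ (2 - ε i) * z i := by
      rw [hfu i, ← hu_i i]
      exact h4
    exact le_of_mul_le_mul_left h6 (FC_epos hε i)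
  -- Part D
  have hD : ∀ j : Fin n, j ≠ i0 → ε j = 0 →
      (Q i0 j = 1 ∧ ∀ i : Fin n, i ≠ i0 → Q i j = 0) →
      (∀ i : Fin n, ε i = 0 → 2 ∣ (Mmat Q i0 i + Mmat Q j i)) →
      ∀ i : Fin n, z i = (1 + ε i) * (Mmat Q i0 i + Mmat Q j i) / 2 := by
    rintro j hji0 hεj ⟨hQ0j, hQkj⟩ hpar
    have hε0 : ε i0 = 1 := by
      rcases hε.1 i0 with h | h
      · exfalso
        have h2 := hpar i0 h
        rw [FC_M_diag hn hsu, hMcol0 j hji0] at h2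
        omega
      · exact h
    obtain ⟨w, hw_i⟩ : ∃ w : Fin n → ℤ,
        ∀ i, w i = (1 + ε i) * (Mmat Q i0 i + Mmat Q j i) / 2 := ⟨_, fun _ => rfl⟩
    have hwu : ∀ i, (2 - ε i) * w i = Mmat Q i0 i + Mmat Q j i := by
      intro i
      rw [hw_i i]
      rcases hε.1 i with h | h
      · have h2 := hpar i h
        rw [h]
        omega
      · rw [h]
        omega
    have hw1 : ∀ i, 1 ≤ w i := by
      intro i
      have hX1 : 1 ≤ Mmat Q i0 i + Mmat Q j i := by
        have := hMpos i; have := FC_M_nonneg h01 j i; linarith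
      rw [hw_i i]
      rcases hε.1 i with h | h
      · have h2 := hpar i h
        rw [h]
        omega
      · rw [h]
        omega
    have hwT : ∀ k, (Tmat Q ε *ᵥ w) k ≤ 0 := by
      apply FC_feas hε hsu
        (fun t => (if t = i0 then (1:ℤ) else 0) + (if t = j then 1 else 0)) w
      · intro i
        rw [hwu i]
        have hsplit : ∀ t : Fin n,
            ((if t = i0 then (1:ℤ) else 0) + (if t = j then 1 else 0)) * Mmat Q t i
            = (if t = i0 then Mmat Q t i else 0) + (if t = j then Mmat Q t i else 0) := by
          intro t
          split_ifs <;> ring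
        rw [Finset.sum_congr rfl fun t _ => hsplit t, Finset.sum_add_distrib]
        rw [Finset.sum_ite_eq' Finset.univ i0 (fun t => Mmat Q t i),
          Finset.sum_ite_eq' Finset.univ j (fun t => Mmat Q t i)]
        simp
      · intro k
        have h1 : ((1 - Q) *ᵥ fun t => (if t = i0 then (1:ℤ) else 0) + (if t = j then 1 else 0)) k
            = ((1:Matrix (Fin n) (Fin n) ℤ) - Q) k i0 + ((1:Matrix (Fin n) (Fin n) ℤ) - Q) k j := by
          simp only [Matrix.mulVec, dotProduct, mul_add]
          rw [Finset.sum_add_distrib]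
          congr 1
          · rw [Finset.sum_eq_single i0]
            · rw [if_pos rfl, mul_one]
            · intro t _ ht; rw [if_neg ht, mul_zero]
            · intro h; exact absurd (Finset.mem_univ i0) h
          · rw [Finset.sum_eq_single j]
            · rw [if_pos rfl, mul_one]
            · intro t _ ht; rw [if_neg ht, mul_zero]
            · intro h; exact absurd (Finset.mem_univ j) h
        rw [h1]
        by_cases hk1 : k = i0
        · rw [hk1, Matrix.sub_apply, Matrix.sub_apply, Matrix.one_apply_eq, hQcol0 i0,
            Matrix.one_apply_ne (Ne.symm hji0 : i0 ≠ j), hQ0j]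
          norm_num
        · rw [Matrix.sub_apply, Matrix.sub_apply, Matrix.one_apply_ne hk1, hQcol0 k,
            hQkj k hk1]
          by_cases hk2 : k = j
          · rw [hk2, Matrix.one_apply_eq]; norm_num
          · rw [Matrix.one_apply_ne hk2]; norm_num
    have hzw : z ≤ w := hzmin w hw1 hwT
    have hkey : ∀ i, Mmat Q i0 i + Mmat Q j i ≤ u i := by
      by_cases h2 : 2 ≤ y i0
      · intro i
        have hMji : Mmat Q j i ≤ Mmat Q i0 i := by
          rw [FC_Mrec2 hsu i0 i]
          have hterm : Q i0 j * Mmat Q j i ≤ ∑ s, Q i0 s * Mmat Q s i :=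
            Finset.single_le_sum
              (fun s _ => mul_nonneg (FC_Q_nonneg h01 _ _) (FC_M_nonneg h01 _ _))
              (Finset.mem_univ j)
          rw [hQ0j, one_mul] at hterm
          have hd : (0:ℤ) ≤ if i0 = i then 1 else 0 := by split <;> norm_num
          linarith
        have h3 : Mmat Q i0 i * y i0 ≤ ∑ t, Mmat Q t i * y t :=
          Finset.single_le_sum
            (fun t _ => mul_nonneg (FC_M_nonneg h01 t i) (hy0 t)) (Finset.mem_univ i0)
        rw [hu_sum i]
        nlinarith [hMpos i]
      · -- y i0 = 1
        have hy1 : y i0 = 1 := by omega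
        have hMtj : ∀ t : Fin n, t ≠ i0 → Mmat Q t j = if t = j then 1 else 0 := by
          intro t ht
          rw [FC_Mrec1 hsu t j]
          have hsum0 : ∑ s, Mmat Q t s * Q s j = 0 := by
            apply Finset.sum_eq_zero
            intro s _
            by_cases hs : s = i0
            · rw [hs, hMcol0 t ht, zero_mul]
            · rw [hQkj s hs, mul_zero]
          rw [hsum0, add_zero]
        have hMi0j : Mmat Q i0 j = 1 := by
          rw [FC_Mrec1 hsu i0 j]
          rw [if_neg (Ne.symm hji0 : i0 ≠ j)]
          rw [Finset.sum_eq_single i0]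
          · rw [FC_M_diag hn hsu, hQ0j]; norm_num
          · intro s _ hs; rw [hQkj s hs, mul_zero]
          · intro h; exact absurd (Finset.mem_univ i0) h
        have huj : u j = 1 + y j := by
          rw [hu_sum j]
          have hterms : ∀ t : Fin n, Mmat Q t j * y t
              = (if t = i0 then y i0 else 0) + (if t = j then y j else 0) := by
            intro t
            by_cases ht : t = i0
            · subst ht
              rw [hMi0j, if_pos rfl, if_neg (Ne.symm hji0), one_mul, add_zero]
            · rw [hMtj t ht, if_neg ht]
              by_cases ht2 : t = j
              · subst ht2; rw [if_pos rfl, if_pos rfl, one_mul, zero_add]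
              · rw [if_neg ht2, if_neg ht2, zero_mul, add_zero]
          rw [Finset.sum_congr rfl fun t _ => hterms t, Finset.sum_add_distrib]
          rw [Finset.sum_ite_eq' Finset.univ i0 (fun _ => y i0),
            Finset.sum_ite_eq' Finset.univ j (fun _ => y j)]
          simp [hy1]
        have hyj1 : 1 ≤ y j := by
          have h4 : u j = 2 * z j := by
            rw [hu_i j, hεj]; ring
          have h5 := hy0 j
          omega
        intro i
        have h5 : ∑ t ∈ ({i0, j} : Finset (Fin n)), Mmat Q t i * y t
            ≤ ∑ t, Mmat Q t i * y t :=
          Finset.sum_le_sum_of_subset_of_nonneg (Finset.subset_univ _)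
            (fun t _ _ => mul_nonneg (FC_M_nonneg h01 t i) (hy0 t))
        rw [Finset.sum_pair (Ne.symm hji0)] at h5
        rw [hu_sum i]
        have h6 := hMpos i
        have h7 := FC_M_nonneg h01 j i
        nlinarith
    have hwz : ∀ i, w i ≤ z i := by
      intro i
      have h7 : (2 - ε i) * w i ≤ (2 - ε i) * z i := by
        rw [hwu i, ← hu_i i]
        exact hkey i
      exact le_of_mul_le_mul_left h7 (FC_epos hε i)
    intro i
    have := le_antisymm (hzw i) (hwz i)
    rw [hw_i i] at this
    exact this
  -- Part C : z ≠ f → witness exists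
  have hCmp : z ≠ f → ∃ j : Fin n, j ≠ i0 ∧ ε j = 0 ∧
      (Q i0 j = 1 ∧ ∀ i : Fin n, i ≠ i0 → Q i j = 0) ∧
      (∀ i : Fin n, ε i = 0 → 2 ∣ (Mmat Q i0 i + Mmat Q j i)) := by
    intro hne
    have hy1 : y i0 = 1 := by
      rcases lt_or_ge (y i0) 2 with h | h
      · omega
      · exact absurd (hbig h) hne
    have hε0 : ε i0 = 1 := by
      rcases hε.1 i0 with h | h
      · exfalso
        have h1 : u i0 = 2 * z i0 := by
          rw [hu_i i0, h]; ring
        have h2 := hz1 i0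
        have h3 := hyi0u
        omega
      · exact h
    have hsum1 : ∑ t, Mmat Q i0 t * c t = 1 := by
      rw [← hy_sum i0, hy1]
    have hterm_nonneg : ∀ t : Fin n, 0 ≤ Mmat Q i0 t * c t :=
      fun t => mul_nonneg (FC_M_nonneg h01 i0 t) (hc0 t)
    have hex : ∃ t, 1 ≤ c t := by
      by_contra hno
      push_neg at hno
      have h1 : ∑ t, Mmat Q i0 t * c t = 0 := by
        apply Finset.sum_eq_zero
        intro t _
        have h2 := hc0 t
        have h3 := hno t
        have h4 : c t = 0 := by omega
        rw [h4, mul_zero]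
      omega
    obtain ⟨j, hcj⟩ := hex
    have hterm_le : Mmat Q i0 j * c j ≤ 1 := by
      rw [← hsum1]
      exact Finset.single_le_sum (fun t _ => hterm_nonneg t) (Finset.mem_univ j)
    have hMj1 : Mmat Q i0 j = 1 := by
      have h1 := hMpos j
      nlinarith
    have hcj1 : c j = 1 := by
      have h1 := hMpos j
      nlinarith
    have hcrest : ∀ t, t ≠ j → c t = 0 := by
      intro t ht
      have h9 : ∑ s ∈ ({t, j} : Finset (Fin n)), Mmat Q i0 s * c s
          ≤ ∑ s, Mmat Q i0 s * c s :=
        Finset.sum_le_sum_of_subset_of_nonneg (Finset.subset_univ _)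
          (fun s _ _ => hterm_nonneg s)
      rw [Finset.sum_pair ht, hsum1, hMj1, hcj1, mul_one] at h9
      have h10 := hterm_nonneg t
      have h11 := hc0 t
      have h12 := hMpos t
      nlinarith
    have hyt : ∀ t, y t = Mmat Q t j := by
      intro t
      rw [hy_sum t, Finset.sum_eq_single j]
      · rw [hcj1, mul_one]
      · intro s _ hs; rw [hcrest s hs, mul_zero]
      · intro h; exact absurd (Finset.mem_univ j) h
    have hεj : ε j = 0 := by
      rcases hε.1 j with h | h
      · exact h
      exfalso
      have hdvdS : (2:ℤ) ∣ (Smat Q *ᵥ u) j := by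
        show (2:ℤ) ∣ ∑ i, Smat Q j i * u i
        apply Finset.dvd_sum
        intro i _
        rcases hε.1 i with hi | hi
        · have h1 : u i = 2 * z i := by
            rw [hu_i i, hi]; ring
          exact Dvd.dvd.mul_left ⟨z i, h1⟩ _
        · exact Dvd.dvd.mul_right (hε.2 j i h hi) _
      rw [hSuNy j, hcj1] at hdvdS
      omega
    have hji0 : j ≠ i0 := by
      intro hh
      rw [hh, hε0] at hεj
      omega
    have hfj : f j = Mmat Q i0 j := by
      show (1 + ε j) * Mmat Q i0 j = _
      rw [hεj]; ring
    have huj2 : u j ≤ 2 := by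
      have h1 : u j = 2 * z j := by
        rw [hu_i j, hεj]; ring
      have h2 := hzf j
      rw [hfj, hMj1] at h2
      rw [h1]
      have h2' : z j ≤ 1 := h2
      omega
    have hujsum : u j = ∑ s, Mmat Q s j * Mmat Q s j := by
      rw [hu_sum j]
      exact Finset.sum_congr rfl fun s _ => by rw [hyt s]
    have hMsj : ∀ s : Fin n, s ≠ i0 → s ≠ j → Mmat Q s j = 0 := by
      intro s hs1 hs2
      have h10 : ∑ t ∈ ({i0, j, s} : Finset (Fin n)), Mmat Q t j * Mmat Q t j ≤ u j := by
        rw [hujsum]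
        exact Finset.sum_le_sum_of_subset_of_nonneg (Finset.subset_univ _)
          (fun t _ _ => mul_self_nonneg _)
      have hmem1 : i0 ∉ ({j, s} : Finset (Fin n)) := by
        simp only [Finset.mem_insert, Finset.mem_singleton]
        push_neg
        exact ⟨Ne.symm hji0, Ne.symm hs1⟩
      have hmem2 : j ∉ ({s} : Finset (Fin n)) := by
        simp only [Finset.mem_singleton]
        exact Ne.symm hs2
      rw [Finset.sum_insert hmem1, Finset.sum_insert hmem2, Finset.sum_singleton,
        hMj1, FC_M_diag hn hsu] at h10
      have h11 := mul_self_nonneg (Mmat Q s j)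
      have h12 : Mmat Q s j * Mmat Q s j = 0 := le_antisymm (by linarith) h11
      exact mul_self_eq_zero.mp h12
    have hQkj : ∀ k : Fin n, k ≠ i0 → Q k j = 0 := by
      intro k hk
      by_cases hkj : k = j
      · subst hkj
        exact hsu k k (lt_irrefl k)
      by_cases hlt : k < j
      · have h12 := FC_Mrec1 hsu k j
        rw [hMsj k hk hkj, if_neg hkj] at h12
        have hterm : Q k j ≤ ∑ s, Mmat Q k s * Q s j := by
          have h13 : Mmat Q k k * Q k j ≤ ∑ s, Mmat Q k s * Q s j :=
            Finset.single_le_sum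
              (fun s _ => mul_nonneg (FC_M_nonneg h01 _ _) (FC_Q_nonneg h01 _ _))
              (Finset.mem_univ k)
          rw [FC_M_diag hn hsu, one_mul] at h13
          exact h13
        have h14 := FC_Q_nonneg h01 k j
        omega
      · exact hsu k j hlt
    have hQ0j : Q i0 j = 1 := by
      obtain ⟨i, hij, hQij⟩ := hE1 j (hlt_i0 j hji0)
      by_cases hii0 : i = i0
      · rw [← hii0]; exact hQij
      · rw [hQkj i hii0] at hQij
        omega
    have hparC : ∀ i : Fin n, ε i = 0 → 2 ∣ (Mmat Q i0 i + Mmat Q j i) := by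
      intro i hi
      have h13 : u i = Mmat Q i0 i + Mmat Q j i := by
        rw [hu_sum i]
        rw [← Finset.sum_subset (Finset.subset_univ ({i0, j} : Finset (Fin n)))]
        · rw [Finset.sum_pair (Ne.symm hji0)]
          rw [hyt i0, hyt j, hMj1, FC_M_diag hn hsu, mul_one, mul_one]
        · intro t _ ht
          simp only [Finset.mem_insert, Finset.mem_singleton] at ht
          push_neg at ht
          rw [hyt t, hMsj t ht.1 ht.2, mul_zero]
      have h14 : u i = 2 * z i := by
        rw [hu_i i, hi]; ring
      rw [← h13]
      exact ⟨z i, by omega⟩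
    exact ⟨j, hji0, hεj, ⟨hQ0j, hQkj⟩, hparC⟩
  -- Part B : witness → z ≠ f
  have hBmpr : (∃ j : Fin n, j ≠ i0 ∧ ε j = 0 ∧
      (Q i0 j = 1 ∧ ∀ i : Fin n, i ≠ i0 → Q i j = 0) ∧
      (∀ i : Fin n, ε i = 0 → 2 ∣ (Mmat Q i0 i + Mmat Q j i))) → z ≠ f := by
    rintro ⟨j, hj1, hj2, hj3, hj4⟩ hzfeq
    have hε0 : ε i0 = 1 := by
      rcases hε.1 i0 with h | h
      · exfalso
        have h2 := hj4 i0 h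
        rw [FC_M_diag hn hsu, hMcol0 j hj1] at h2
        omega
      · exact h
    have hzi := hD j hj1 hj2 hj3 hj4 i0
    rw [FC_M_diag hn hsu, hMcol0 j hj1, hε0] at hzi
    norm_num at hzi
    have hfi0 : f i0 = 2 := by
      show (1 + ε i0) * Mmat Q i0 i0 = 2
      rw [hε0, FC_M_diag hn hsu]
      norm_num
    rw [hzfeq, hfi0] at hzi
    exact absurd hzi (by norm_num)
  exact ⟨hzf, ⟨hCmp, hBmpr⟩, hD⟩
end

section
/- Let Q be a proximity matrix and ε a branch vector for Q. If an index j > 1 satisfies the three conditions: ε_j = 0, q_j is infinitely near of order one to q_1, and m_{1i} + m_{ji} is even for every i with ε_i = 0, then necessarily ε_1 = 1 (so the multiplicity of the branch curve at q_1 is odd), and j is the unique index satisfying these three conditions. -/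
open Matrix Finset

lemma powQ_lt {n : ℕ} {Q : Matrix (Fin n) (Fin n) ℤ}
    (hQ : ∀ i j : Fin n, ¬ i < j → Q i j = 0) :
    ∀ (k : ℕ) (a b : Fin n), (b : ℕ) < (a : ℕ) + k → (Q ^ k) a b = 0 := by
  intro k
  induction k with
  | zero =>
    intro a b h
    rw [pow_zero, Matrix.one_apply_ne]
    intro e; rw [e] at h; omega
  | succ k ih =>
    intro a b h
    rw [pow_succ', Matrix.mul_apply]
    apply Finset.sum_eq_zero
    intro c _
    by_cases hac : a < c
    · rw [ih c b (by have : (a : ℕ) < (c : ℕ) := hac; omega), mul_zero]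
    · rw [hQ a c hac, zero_mul]

lemma Mmat_eq {n : ℕ} {Q : Matrix (Fin n) (Fin n) ℤ}
    (hQ : ∀ i j : Fin n, ¬ i < j → Q i j = 0) :
    Mmat Q = 1 + Mmat Q * Q := by
  have hQn : Q ^ n = 0 := by
    ext a b
    simpa using powQ_lt hQ n a b (by omega)
  unfold Mmat
  rw [Finset.sum_mul]
  have h1 : ∀ k ∈ Finset.range n, Q ^ k * Q = Q ^ (k + 1) :=
    fun k _ => (pow_succ Q k).symm
  rw [Finset.sum_congr rfl h1]
  have h2 : (∑ k ∈ Finset.range (n + 1), Q ^ k) = ∑ k ∈ Finset.range n, Q ^ k := by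
    rw [Finset.sum_range_succ, hQn, add_zero]
  rw [← h2, Finset.sum_range_succ', pow_zero, add_comm]

lemma Mmat_diag {n : ℕ} {Q : Matrix (Fin n) (Fin n) ℤ}
    (hQ : ∀ i j : Fin n, ¬ i < j → Q i j = 0) (hn : 1 ≤ n) (a : Fin n) :
    Mmat Q a a = 1 := by
  unfold Mmat
  rw [Matrix.sum_apply]
  rw [Finset.sum_eq_single 0]
  · simp
  · intro k _ hk
    exact powQ_lt hQ k a a (by omega)
  · intro h; exact absurd (Finset.mem_range.mpr (by omega)) h

lemma Mmat_zero_col {n : ℕ} {Q : Matrix (Fin n) (Fin n) ℤ}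
    (hQ : ∀ i j : Fin n, ¬ i < j → Q i j = 0) (hn : 1 ≤ n)
    (a : Fin n) (ha : a ≠ ⟨0, hn⟩) :
    Mmat Q a ⟨0, hn⟩ = 0 := by
  have ha' : 0 < (a : ℕ) := by
    rcases Nat.eq_zero_or_pos (a : ℕ) with h | h
    · exact absurd (Fin.ext h) ha
    · exact h
  unfold Mmat
  rw [Matrix.sum_apply]
  apply Finset.sum_eq_zero
  intro k _
  exact powQ_lt hQ k a ⟨0, hn⟩ (by simp; omega)

/-- If column `j'` of `Q` has its only nonzero entry at row `i0 = 0`,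
then `M a j' = δ_{a j'} + M a i0`. -/
lemma Mmat_col {n : ℕ} {Q : Matrix (Fin n) (Fin n) ℤ}
    (hQ : ∀ i j : Fin n, ¬ i < j → Q i j = 0) (hn : 1 ≤ n)
    (j' : Fin n) (h1 : Q ⟨0, hn⟩ j' = 1)
    (h2 : ∀ i : Fin n, i ≠ ⟨0, hn⟩ → Q i j' = 0) (a : Fin n) :
    Mmat Q a j' = (1 : Matrix (Fin n) (Fin n) ℤ) a j' + Mmat Q a ⟨0, hn⟩ := by
  conv_lhs => rw [Mmat_eq hQ]
  rw [Matrix.add_apply, Matrix.mul_apply]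
  congr 1
  rw [Finset.sum_eq_single (⟨0, hn⟩ : Fin n)]
  · rw [h1, mul_one]
  · intro c _ hc; rw [h2 c hc, mul_zero]
  · intro h; exact absurd (Finset.mem_univ _) h

/-- If `j > 1` satisfies `ε_j = 0`, `q_j` infinitely near of order
one to `q_1`, and `m_{1i} + m_{ji}` even for every `i` with `ε_i = 0`, then
necessarily `ε_1 = 1` (the multiplicity of the branch curve at `q_1` is odd),
and `j` is the unique index with these three properties. -/
theorem exceptional_index_forces_branched_and_unique
    (n : ℕ) (hn : 1 ≤ n) (Q : Matrix (Fin n) (Fin n) ℤ)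
    (hQ : IsProxMat Q) (ε : Fin n → ℤ) (hε : IsBranchVec Q ε)
    (j : Fin n) (hj0 : j ≠ ⟨0, hn⟩) (hj1 : ε j = 0)
    (hj2 : Q ⟨0, hn⟩ j = 1 ∧ ∀ i : Fin n, i ≠ ⟨0, hn⟩ → Q i j = 0)
    (hj3 : ∀ i : Fin n, ε i = 0 → 2 ∣ (Mmat Q ⟨0, hn⟩ i + Mmat Q j i)) :
    ε ⟨0, hn⟩ = 1 ∧
    ∀ j' : Fin n, j' ≠ ⟨0, hn⟩ → ε j' = 0 →
      (Q ⟨0, hn⟩ j' = 1 ∧ ∀ i : Fin n, i ≠ ⟨0, hn⟩ → Q i j' = 0) →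
      (∀ i : Fin n, ε i = 0 → 2 ∣ (Mmat Q ⟨0, hn⟩ i + Mmat Q j' i)) →
      j' = j := by
  set i0 : Fin n := ⟨0, hn⟩ with hi0
  have hUT := hQ.1
  -- Part 1: ε i0 = 1
  have hε1 : ε i0 = 1 := by
    rcases hε.1 i0 with h | h
    · exfalso
      have hd := hj3 i0 h
      rw [Mmat_diag hUT hn, Mmat_zero_col hUT hn j hj0] at hd
      omega
    · exact h
  refine ⟨hε1, ?_⟩
  intro j' hj0' hj1' hj2' _
  by_contra hne
  -- compute M i0 j' and M j j'
  have hij' : i0 ≠ j' := by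
    intro e
    have := hj2'.1
    rw [← e, hUT i0 i0 (lt_irrefl i0)] at this
    exact absurd this (by norm_num)
  have hM1 : Mmat Q i0 j' = 1 := by
    rw [Mmat_col hUT hn j' hj2'.1 hj2'.2 i0, Matrix.one_apply_ne hij',
      Mmat_diag hUT hn, zero_add]
  have hM2 : Mmat Q j j' = 0 := by
    rw [Mmat_col hUT hn j' hj2'.1 hj2'.2 j,
      Matrix.one_apply_ne (fun e => hne e.symm), Mmat_zero_col hUT hn j hj0,
      add_zero]
  have hd := hj3 j' hj1'
  rw [hM1, hM2] at hd
  omega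
end

section
/- Let Q be a proximity matrix satisfying the Enriques axioms (E1)–(E4) and ε a branch vector for Q; let z be the fundamental cycle for T. Suppose ε_k = 1 and s_{kk} = −2, so that T_{kk} = −1 (F_k is a (−1)-curve), and define the matrix T̄, indexed by the indices i, j ≠ k, by T̄_{ij} = T_{ij} + T_{ik} T_{jk} (the intersection matrix of the exceptional curves of the resolution obtained by contracting F_k). Then the restriction of z to the indices i ≠ k is the componentwise-least vector z̄, indexed by i ≠ k, with z̄_i ≥ 1 for all i ≠ k and (T̄ z̄)_j ≤ 0 for all j ≠ k. (The fundamental cycle of the minimal resolution is ∑_{i ≠ k} z_i F̄_i.) -/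
open Matrix Finset

lemma Smat_symm {n : ℕ} (Q : Matrix (Fin n) (Fin n) ℤ) (i j : Fin n) :
    Smat Q i j = Smat Q j i := by
  simp only [Smat, Matrix.neg_apply, Matrix.mul_apply, Matrix.transpose_apply]
  congr 1
  exact Finset.sum_congr rfl fun l _ => mul_comm _ _

lemma Smat_apply_lt {n : ℕ} (Q : Matrix (Fin n) (Fin n) ℤ) (hQ : IsProxMat Q)
    (i j : Fin n) (hij : i < j) :
    Smat Q i j = Q i j - ∑ l, Q i l * Q j l := by
  have hji : Q j i = 0 := hQ.1 j i (asymm hij)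
  simp only [Smat, Matrix.neg_apply, Matrix.mul_apply, Matrix.transpose_apply,
    Matrix.sub_apply, Matrix.one_apply]
  have : ∀ l, ((if i = l then (1:ℤ) else 0) - Q i l) * ((if j = l then 1 else 0) - Q j l)
      = (if i = l then (if j = l then (1:ℤ) else 0) else 0)
        - (if i = l then Q j l else 0) - (if j = l then Q i l else 0) + Q i l * Q j l := by
    intro l; split_ifs <;> ring
  rw [Finset.sum_congr rfl fun l _ => this l]
  simp only [Finset.sum_add_distrib, Finset.sum_sub_distrib, Finset.sum_ite_eq,
    Finset.mem_univ, if_true]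
  have hne : ¬ (j = i) := (Fin.ne_of_gt hij)
  rw [if_neg (fun h : j = i => hne h)]
  ring_nf
  omega

lemma Smat_nonneg_of_lt {n : ℕ} (Q : Matrix (Fin n) (Fin n) ℤ) (hQ : IsProxMat Q)
    (hE : EnriquesAxioms Q) (i j : Fin n) (hij : i < j) : 0 ≤ Smat Q i j := by
  rw [Smat_apply_lt Q hQ i j hij]
  rw [sub_nonneg]
  by_cases h : ∃ l0 : Fin n, Q i l0 = 1 ∧ Q j l0 = 1
  · obtain ⟨l0, h1, h2⟩ := h
    have hQij : Q i j = 1 := hE.2.2.1 i j l0 hij h1 h2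
    calc ∑ l, Q i l * Q j l ≤ ∑ l, (if l = l0 then (1:ℤ) else 0) := by
          apply Finset.sum_le_sum
          intro l _
          by_cases hl : l = l0
          · subst hl; simp [h1, h2]
          · rcases hQ.2 i l with h3 | h3
            · simp [h3, hl]
            · rcases hQ.2 j l with h4 | h4
              · simp [h4, hl]
              · exact absurd (hE.2.2.2 i j hij l l0 h3 h4 h1 h2) hl
      _ = 1 := by simp
      _ = Q i j := hQij.symm
  · push_neg at h
    have : ∀ l, Q i l * Q j l = 0 := by
      intro l
      rcases hQ.2 i l with h3 | h3
      · simp [h3]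
      · rcases hQ.2 j l with h4 | h4
        · simp [h4]
        · exact absurd h4 (h l h3)
    rw [Finset.sum_congr rfl fun l _ => this l]
    simp
    rcases hQ.2 i j with h5 | h5 <;> simp [h5]

lemma Smat_nonneg_of_ne {n : ℕ} (Q : Matrix (Fin n) (Fin n) ℤ) (hQ : IsProxMat Q)
    (hE : EnriquesAxioms Q) (i j : Fin n) (hij : i ≠ j) : 0 ≤ Smat Q i j := by
  rcases lt_or_gt_of_ne hij with h | h
  · exact Smat_nonneg_of_lt Q hQ hE i j h
  · rw [Smat_symm]; exact Smat_nonneg_of_lt Q hQ hE j i h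

lemma Tmat_symm {n : ℕ} (Q : Matrix (Fin n) (Fin n) ℤ) (ε : Fin n → ℤ) (i j : Fin n) :
    Tmat Q ε i j = Tmat Q ε j i := by
  unfold Tmat
  rw [Smat_symm]
  congr 1
  ring

lemma Tmat_nonneg {n : ℕ} (Q : Matrix (Fin n) (Fin n) ℤ) (hQ : IsProxMat Q)
    (hE : EnriquesAxioms Q) (ε : Fin n → ℤ) (hε : IsBranchVec Q ε) (i j : Fin n)
    (hij : i ≠ j) : 0 ≤ Tmat Q ε i j := by
  apply Int.ediv_nonneg _ (by norm_num)
  have h1 : 0 ≤ 2 - ε i := by rcases hε.1 i with h | h <;> simp [h]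
  have h2 : 0 ≤ 2 - ε j := by rcases hε.1 j with h | h <;> simp [h]
  exact mul_nonneg (mul_nonneg h1 h2) (Smat_nonneg_of_ne Q hQ hE i j hij)

lemma sum_subtype_ne {n : ℕ} (k : Fin n) (g : Fin n → ℤ) :
    ∑ i : {i : Fin n // i ≠ k}, g i.val = ∑ i, g i - g k := by
  rw [← Finset.sum_subtype (Finset.univ.erase k) (by simp) g,
    Finset.sum_erase_eq_sub (Finset.mem_univ k)]


theorem aux_main
    (n : ℕ) (hn : 1 ≤ n) (Q : Matrix (Fin n) (Fin n) ℤ)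
    (hQ : IsProxMat Q) (hE : EnriquesAxioms Q)
    (ε : Fin n → ℤ) (hε : IsBranchVec Q ε)
    (z : Fin n → ℤ)
    (hz1 : ∀ i, 1 ≤ z i) (hz2 : ∀ k, (Tmat Q ε *ᵥ z) k ≤ 0)
    (hz3 : ∀ w : Fin n → ℤ, (∀ i, 1 ≤ w i) → (∀ k, (Tmat Q ε *ᵥ w) k ≤ 0) → z ≤ w)
    (k : Fin n) (hk1 : ε k = 1) (hk2 : Smat Q k k = -2) :
    (∀ i : {i : Fin n // i ≠ k}, 1 ≤ z i.val) ∧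
    (∀ j : {i : Fin n // i ≠ k},
      ((fun (i j : {i : Fin n // i ≠ k}) =>
          Tmat Q ε i.val j.val + Tmat Q ε i.val k * Tmat Q ε j.val k : Matrix _ _ ℤ) *ᵥ
        (fun i : {i : Fin n // i ≠ k} => z i.val)) j ≤ 0) ∧
    (∀ w : {i : Fin n // i ≠ k} → ℤ, (∀ i, 1 ≤ w i) →
      (∀ j : {i : Fin n // i ≠ k},
        ((fun (i j : {i : Fin n // i ≠ k}) =>
            Tmat Q ε i.val j.val + Tmat Q ε i.val k * Tmat Q ε j.val k : Matrix _ _ ℤ) *ᵥ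
          w) j ≤ 0) →
      (fun i : {i : Fin n // i ≠ k} => z i.val) ≤ w) := by
  set T := Tmat Q ε with hT
  have hTkk : T k k = -1 := by
    rw [hT]; unfold Tmat; rw [hk1, hk2]; norm_num
  have hTnn : ∀ i : Fin n, i ≠ k → 0 ≤ T i k := fun i hi => Tmat_nonneg Q hQ hE ε hε i k hi
  have hTsymm : ∀ a b : Fin n, T a b = T b a := fun a b => Tmat_symm Q ε a b
  refine ⟨fun i => hz1 i.val, ?_, ?_⟩
  · intro j
    show ∑ i : {i : Fin n // i ≠ k}, (T j.val i.val + T j.val k * T i.val k) * z i.val ≤ 0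
    rw [sum_subtype_ne k (fun i => (T j.val i + T j.val k * T i k) * z i)]
    have hgk : (T j.val k + T j.val k * T k k) * z k = 0 := by rw [hTkk]; ring
    rw [hgk, sub_zero]
    have hsum : ∑ i, (T j.val i + T j.val k * T i k) * z i
        = (T *ᵥ z) j.val + T j.val k * (T *ᵥ z) k := by
      simp only [mulVec, dotProduct]
      rw [Finset.mul_sum, ← Finset.sum_add_distrib]
      refine Finset.sum_congr rfl fun i _ => ?_
      rw [hTsymm k i]; ring
    rw [hsum]
    exact add_nonpos (hz2 j.val)
      (mul_nonpos_of_nonneg_of_nonpos (hTnn j.val j.prop) (hz2 k))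
  · intro w hw1 hw2
    set c : ℤ := ∑ i : {i : Fin n // i ≠ k}, T i.val k * w i with hc
    have hc0 : 0 ≤ c := Finset.sum_nonneg fun i _ =>
      mul_nonneg (hTnn i.val i.prop) (le_trans zero_le_one (hw1 i))
    set W : Fin n → ℤ := fun i => if h : i = k then max 1 c else w ⟨i, h⟩ with hW
    have hWk : W k = max 1 c := by simp [hW]
    have hWi : ∀ i : {i : Fin n // i ≠ k}, W i.val = w i := by
      intro i; simp [hW, i.prop]
    have hW1 : ∀ i, 1 ≤ W i := by
      intro i
      by_cases h : i = k
      · subst h; rw [hWk]; exact le_max_left 1 c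
      · rw [hWi ⟨i, h⟩]; exact hw1 ⟨i, h⟩
    have hkey : ∀ j : Fin n, j ≠ k → T j k * (W k - c) = 0 := by
      intro j hj
      rcases le_or_gt 1 c with h | h
      · rw [hWk, max_eq_right h]; ring
      · have hc' : c = 0 := le_antisymm (by omega) hc0
        have hterm : ∀ i : {i : Fin n // i ≠ k}, T i.val k * w i = 0 := by
          have := (Finset.sum_eq_zero_iff_of_nonneg (fun i _ =>
            mul_nonneg (hTnn i.val i.prop) (le_trans zero_le_one (hw1 i)))).mp (hc ▸ hc')
          exact fun i => this i (Finset.mem_univ i)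
        have hTj : T j k = 0 := by
          have h1 := hterm ⟨j, hj⟩
          have h2 : (0:ℤ) < w ⟨j, hj⟩ := lt_of_lt_of_le zero_lt_one (hw1 _)
          exact (mul_eq_zero.mp h1).resolve_right (ne_of_gt h2)
        rw [hTj]; ring
    have hWle : ∀ m : Fin n, (T *ᵥ W) m ≤ 0 := by
      intro m
      have hsub := sum_subtype_ne k (fun i => T m i * W i)
      show ∑ i, T m i * W i ≤ 0
      by_cases hm : m = k
      · subst hm
        have h1 : ∑ i : {i : Fin n // i ≠ m}, T m i.val * W i.val = c := by
          rw [hc]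
          exact Finset.sum_congr rfl fun i _ => by rw [hTsymm m i.val, hWi i]
        have h2 : T m m * W m = -(W m) := by rw [hTkk]; ring
        have h3 : c ≤ W m := hWk ▸ le_max_right 1 c
        linarith [hsub, h1, h2, h3]
      · have h2 := hw2 ⟨m, hm⟩
        simp only [mulVec, dotProduct] at h2
        have h3 : ∑ i : {i : Fin n // i ≠ k}, (T m i.val + T m k * T i.val k) * w i
            = (∑ i : {i : Fin n // i ≠ k}, T m i.val * w i) + T m k * c := by
          rw [hc, Finset.mul_sum, ← Finset.sum_add_distrib]
          exact Finset.sum_congr rfl fun i _ => by ring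
        have h4 : ∑ i : {i : Fin n // i ≠ k}, T m i.val * W i.val
            = ∑ i : {i : Fin n // i ≠ k}, T m i.val * w i :=
          Finset.sum_congr rfl fun i _ => by rw [hWi i]
        have h5 : T m k * W k = T m k * c := by linear_combination hkey m hm
        linarith [hsub, h2, h3, h4, h5]
    have hle := hz3 W hW1 hWle
    exact fun i => (hWi i) ▸ hle i.val

/-- If `ε_k = 1` and `s_{kk} = -2` (so `T_{kk} = -1` and `F_k` is a
`(-1)`-curve), let `T̄_{ij} = T_{ij} + T_{ik} T_{jk}` for `i, j ≠ k` be the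
intersection matrix after contracting `F_k`.  Then the restriction of the
fundamental cycle `z` to the indices `i ≠ k` is the fundamental cycle for `T̄`,
i.e. the componentwise-least vector `z̄` with `z̄_i ≥ 1` and `(T̄ z̄)_j ≤ 0`. -/
theorem fundamental_cycle_of_minimal_resolution
    (n : ℕ) (hn : 1 ≤ n) (Q : Matrix (Fin n) (Fin n) ℤ)
    (hQ : IsProxMat Q) (hE : EnriquesAxioms Q)
    (ε : Fin n → ℤ) (hε : IsBranchVec Q ε)
    (z : Fin n → ℤ) (hz : IsFundCycle (Tmat Q ε) z)
    (k : Fin n) (hk1 : ε k = 1) (hk2 : Smat Q k k = -2) :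
    (∀ i : {i : Fin n // i ≠ k}, 1 ≤ z i.val) ∧
    (∀ j : {i : Fin n // i ≠ k},
      ((fun (i j : {i : Fin n // i ≠ k}) =>
          Tmat Q ε i.val j.val + Tmat Q ε i.val k * Tmat Q ε j.val k : Matrix _ _ ℤ) *ᵥ
        (fun i : {i : Fin n // i ≠ k} => z i.val)) j ≤ 0) ∧
    (∀ w : {i : Fin n // i ≠ k} → ℤ, (∀ i, 1 ≤ w i) →
      (∀ j : {i : Fin n // i ≠ k},
        ((fun (i j : {i : Fin n // i ≠ k}) =>
            Tmat Q ε i.val j.val + Tmat Q ε i.val k * Tmat Q ε j.val k : Matrix _ _ ℤ) *ᵥ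
          w) j ≤ 0) →
      (fun i : {i : Fin n // i ≠ k} => z i.val) ≤ w) :=
  aux_main n hn Q hQ hE ε hε z hz.1 hz.2.1 hz.2.2 k hk1 hk2
end

section
/- Let Q be a proximity matrix and ε a branch vector for Q, with T the associated intersection matrix. Then: (a) for every j, T_{jj} = −1 if and only if ε_j = 1 and s_{jj} = −2; (b) if ε_j = 0 then T_{jj} ≤ −2; (c) if T_{ii} = T_{jj} = −1 with i ≠ j, then T_{ij} = 0. (An exceptional curve F_j of the canonical resolution is a (−1)-curve exactly when it lies over a branched exceptional curve of self-intersection −2, and the (−1)-curves in the exceptional fiber are pairwise disjoint.) -/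
open Matrix Finset

lemma smat_diag_eq {n : ℕ} (Q : Matrix (Fin n) (Fin n) ℤ) (hQ : IsProxMat Q) (j : Fin n) :
    Smat Q j j = -(1 + ∑ k, Q j k) := by
  have h0 : Q j j = 0 := hQ.1 j j (lt_irrefl j)
  simp only [Smat, Matrix.neg_apply, Matrix.mul_apply, Matrix.transpose_apply,
    Matrix.sub_apply, Matrix.one_apply]
  congr 1
  have key : ∀ k : Fin n,
      ((if j = k then (1:ℤ) else 0) - Q j k) * ((if j = k then (1:ℤ) else 0) - Q j k)
      = (if j = k then 1 else 0) + Q j k := by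
    intro k
    by_cases h : j = k
    · subst h; simp [h0]
    · rcases hQ.2 j k with h1 | h1 <;> simp [h, h1] <;> ring
  rw [Finset.sum_congr rfl fun k _ => key k, Finset.sum_add_distrib]
  simp

lemma row_sum_nonneg {n : ℕ} (Q : Matrix (Fin n) (Fin n) ℤ) (hQ : IsProxMat Q) (j : Fin n) :
    0 ≤ ∑ k, Q j k :=
  Finset.sum_nonneg fun k _ => by rcases hQ.2 j k with h | h <;> simp [h]

lemma smat_offdiag_eq {n : ℕ} (Q : Matrix (Fin n) (Fin n) ℤ) (hQ : IsProxMat Q)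
    (i j : Fin n) (hij : i ≠ j) :
    Smat Q i j = Q i j + Q j i - ∑ k ∈ (univ.erase j).erase i, Q i k * Q j k := by
  have hii : Q i i = 0 := hQ.1 i i (lt_irrefl i)
  have hjj : Q j j = 0 := hQ.1 j j (lt_irrefl j)
  simp only [Smat, Matrix.neg_apply, Matrix.mul_apply, Matrix.transpose_apply,
    Matrix.sub_apply, Matrix.one_apply]
  have hi : i ∈ (univ : Finset (Fin n)).erase j := by simp [hij]
  rw [← Finset.sum_erase_add _ _ (Finset.mem_univ j), ← Finset.sum_erase_add _ _ hi]
  have hrest : ∑ k ∈ (univ.erase j).erase i,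
      ((if i = k then (1:ℤ) else 0) - Q i k) * ((if j = k then (1:ℤ) else 0) - Q j k)
      = ∑ k ∈ (univ.erase j).erase i, Q i k * Q j k := by
    refine Finset.sum_congr rfl fun k hk => ?_
    have hki : i ≠ k := fun h => (Finset.mem_erase.1 hk).1 h.symm
    have hkj : j ≠ k := fun h => (Finset.mem_erase.1 ((Finset.mem_erase.1 hk).2)).1 h.symm
    simp [hki, hkj]
  rw [hrest]
  have hfj : ((if i = j then (1:ℤ) else 0) - Q i j) * ((if j = j then (1:ℤ) else 0) - Q j j)
      = -Q i j := by simp [hij, hjj]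
  have hfi : ((if i = i then (1:ℤ) else 0) - Q i i) * ((if j = i then (1:ℤ) else 0) - Q j i)
      = -Q j i := by simp [Ne.symm hij, hii]
  rw [hfj, hfi]; ring

lemma offdiag_sum_bounds {n : ℕ} (Q : Matrix (Fin n) (Fin n) ℤ) (hQ : IsProxMat Q)
    (i j : Fin n) :
    0 ≤ ∑ k ∈ (univ.erase j).erase i, Q i k * Q j k ∧
    ∑ k ∈ (univ.erase j).erase i, Q i k * Q j k ≤ ∑ k, Q i k := by
  constructor
  · exact Finset.sum_nonneg fun k _ => by
      rcases hQ.2 i k with h | h <;> rcases hQ.2 j k with h' | h' <;> simp [h, h']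
  · calc ∑ k ∈ (univ.erase j).erase i, Q i k * Q j k
        ≤ ∑ k ∈ (univ.erase j).erase i, Q i k := by
          refine Finset.sum_le_sum fun k _ => ?_
          rcases hQ.2 i k with h | h <;> rcases hQ.2 j k with h' | h' <;> simp [h, h']
      _ ≤ ∑ k, Q i k := by
          refine Finset.sum_le_sum_of_subset_of_nonneg (fun k _ => Finset.mem_univ k)
            fun k _ _ => ?_
          rcases hQ.2 i k with h | h <;> simp [h]

/-- For the intersection matrix `T` of the exceptional curves of
the canonical resolution: (a) `T_{jj} = -1` iff `ε_j = 1` and `s_{jj} = -2`;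
(b) if `ε_j = 0` then `T_{jj} ≤ -2`; (c) two `(-1)`-curves are disjoint:
if `T_{ii} = T_{jj} = -1` with `i ≠ j` then `T_{ij} = 0`. -/
theorem minus_one_curves_of_canonical_resolution
    (n : ℕ) (hn : 1 ≤ n) (Q : Matrix (Fin n) (Fin n) ℤ)
    (hQ : IsProxMat Q) (ε : Fin n → ℤ) (hε : IsBranchVec Q ε) :
    (∀ j : Fin n, Tmat Q ε j j = -1 ↔ (ε j = 1 ∧ Smat Q j j = -2)) ∧
    (∀ j : Fin n, ε j = 0 → Tmat Q ε j j ≤ -2) ∧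
    (∀ i j : Fin n, i ≠ j → Tmat Q ε i i = -1 → Tmat Q ε j j = -1 →
      Tmat Q ε i j = 0) := by
  have hdiag : ∀ j : Fin n, Tmat Q ε j j = -1 ↔ (ε j = 1 ∧ Smat Q j j = -2) := by
    intro j
    have hs := smat_diag_eq Q hQ j
    have hr := row_sum_nonneg Q hQ j
    rcases hε.1 j with h0 | h1
    · simp only [Tmat, h0]
      rw [show (2-(0:ℤ))*(2-0)*Smat Q j j = 4 * Smat Q j j from by ring]
      omega
    · have hdvd : (2:ℤ) ∣ Smat Q j j := hε.2 j j h1 h1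
      simp only [Tmat, h1]
      rw [show (2-(1:ℤ))*(2-1)*Smat Q j j = Smat Q j j from by ring]
      simp only [true_and]
      omega
  refine ⟨hdiag, ?_, ?_⟩
  · intro j h0
    have hs := smat_diag_eq Q hQ j
    have hr := row_sum_nonneg Q hQ j
    simp only [Tmat, h0]
    rw [show (2-(0:ℤ))*(2-0)*Smat Q j j = 4 * Smat Q j j from by ring]
    omega
  · intro i j hij hi hj
    obtain ⟨hei, hsi⟩ := (hdiag i).1 hi
    obtain ⟨hej, hsj⟩ := (hdiag j).1 hj
    have hsumi : ∑ k, Q i k = 1 := by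
      have := smat_diag_eq Q hQ i; omega
    have hoff := smat_offdiag_eq Q hQ i j hij
    have hbd := offdiag_sum_bounds Q hQ i j
    have hdvd : (2:ℤ) ∣ Smat Q i j := hε.2 i j hei hej
    have hQij : Q i j + Q j i ≤ 1 ∧ 0 ≤ Q i j + Q j i := by
      rcases lt_or_gt_of_ne hij with h | h
      · have := hQ.1 j i (not_lt_of_gt h)
        rcases hQ.2 i j with h' | h' <;> omega
      · have := hQ.1 i j (not_lt_of_gt h)
        rcases hQ.2 j i with h' | h' <;> omega
    simp only [Tmat, hei, hej]
    rw [show (2-(1:ℤ))*(2-1)*Smat Q i j = Smat Q i j from by ring]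
    omega
end

section
/- Let Q be a proximity matrix satisfying the Enriques axioms (E1)–(E4) and let α̃ be a multiplicity vector for Q satisfying the terminal conditions of the canonical resolution. If ε_j = 1 and s_{jj} = −2 (so F_j is a (−1)-curve of the canonical resolution), then μ_j is odd, there is exactly one index i with q_{ji} = 1, and this index satisfies α̃_i = α̃_j and μ_i = μ_j + 1. (The branch curve has two infinitely near points of the same odd multiplicity μ_j at q_j.) -/
open Matrix Finset

/-- A multiplicity vector for `Q`: nonnegative entries satisfying the proximity
inequalities `α̃_i ≥ ∑_j q_{ij} α̃_j`. -/
def IsMultVec {n : ℕ} (Q : Matrix (Fin n) (Fin n) ℤ) (a : Fin n → ℤ) : Prop :=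
  (∀ i, 0 ≤ a i) ∧ ∀ i, (∑ j, Q i j * a j) ≤ a i

/-- `β̃ = α̃ M`: multiplicities of the total transform of the branch curve. -/
def betaVec {n : ℕ} (Q : Matrix (Fin n) (Fin n) ℤ) (a : Fin n → ℤ) : Fin n → ℤ :=
  a ᵥ* Mmat Q

/-- `γ̃ = α̃ Nᵀ`: intersection degrees of the proper transform of the branch curve
with the exceptional curves. -/
def gammaVec {n : ℕ} (Q : Matrix (Fin n) (Fin n) ℤ) (a : Fin n → ℤ) : Fin n → ℤ :=
  a ᵥ* (1 - Q)ᵀ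

/-- `ε_i = β̃_i mod 2`: the branchedness of the `i`-th exceptional curve. -/
def epsVec {n : ℕ} (Q : Matrix (Fin n) (Fin n) ℤ) (a : Fin n → ℤ) : Fin n → ℤ :=
  fun i => betaVec Q a i % 2

/-- `μ = α̃ + ε Q`: the multiplicities of the total branch curves at the blown-up
points. -/
def muVec {n : ℕ} (Q : Matrix (Fin n) (Fin n) ℤ) (a : Fin n → ℤ) : Fin n → ℤ :=
  fun i => a i + (epsVec Q a ᵥ* Q) i

/-- `α = μ - ε`. -/
def alphaVec {n : ℕ} (Q : Matrix (Fin n) (Fin n) ℤ) (a : Fin n → ℤ) : Fin n → ℤ :=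
  fun i => muVec Q a i - epsVec Q a i

/-- The terminal conditions of the canonical resolution: `γ̃_i = 0` whenever
`ε_i = 1`; `s_{ij} = 0` whenever `i ≠ j` and `ε_i = ε_j = 1`; and `μ_i ≥ 2`. -/
def TerminalConds {n : ℕ} (Q : Matrix (Fin n) (Fin n) ℤ) (a : Fin n → ℤ) : Prop :=
  (∀ i, epsVec Q a i = 1 → gammaVec Q a i = 0) ∧
  (∀ i j, i ≠ j → epsVec Q a i = 1 → epsVec Q a j = 1 → Smat Q i j = 0) ∧
  (∀ i, 2 ≤ muVec Q a i)


lemma pm_pow_apply_eq_zero {n : ℕ} (Q : Matrix (Fin n) (Fin n) ℤ)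
    (hQ : ∀ i j : Fin n, ¬ i < j → Q i j = 0) :
    ∀ k : ℕ, ∀ i j : Fin n, (j : ℕ) < (i : ℕ) + k → (Q ^ k) i j = 0 := by
  intro k
  induction k with
  | zero =>
    intro i j h
    simp only [Nat.add_zero] at h
    rw [pow_zero]
    exact Matrix.one_apply_ne (by intro he; subst he; omega)
  | succ k ih =>
    intro i j h
    rw [pow_succ, Matrix.mul_apply]
    apply Finset.sum_eq_zero
    intro l _
    by_cases hl : (l : ℕ) < (i : ℕ) + k
    · rw [ih i l hl, zero_mul]
    · rw [hQ l j (by rw [Fin.lt_def]; omega), mul_zero]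

lemma pm_Mmat_mul {n : ℕ} (Q : Matrix (Fin n) (Fin n) ℤ)
    (hQ : ∀ i j : Fin n, ¬ i < j → Q i j = 0) :
    Mmat Q * (1 - Q) = 1 := by
  have h0 : Q ^ n = 0 := by
    ext i j
    rw [pm_pow_apply_eq_zero Q hQ n i j (by have := j.isLt; omega)]
    simp
  have h := geom_sum_mul Q n
  rw [h0] at h
  unfold Mmat
  calc (∑ k ∈ Finset.range n, Q ^ k) * (1 - Q)
      = -((∑ k ∈ Finset.range n, Q ^ k) * (Q - 1)) := by rw [← mul_neg, neg_sub]
    _ = 1 := by rw [h]; simp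

/-- If `ε_j = 1` and `s_{jj} = -2` (so `F_j` is a `(-1)`-curve of
the canonical resolution), then `μ_j` is odd, there is exactly one index `i` with
`q_{ji} = 1`, and this index satisfies `α̃_i = α̃_j` and `μ_i = μ_j + 1` (the branch
curve has two infinitely near points of the same odd multiplicity `μ_j` at `q_j`). -/
theorem minus_one_curve_of_branch_multiplicities
    (n : ℕ) (hn : 1 ≤ n) (Q : Matrix (Fin n) (Fin n) ℤ)
    (hQ : IsProxMat Q) (hE : EnriquesAxioms Q)
    (a : Fin n → ℤ) (ha : IsMultVec Q a) (hterm : TerminalConds Q a)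
    (j : Fin n) (h1 : epsVec Q a j = 1) (h2 : Smat Q j j = -2) :
    Odd (muVec Q a j) ∧ (∃! i : Fin n, Q j i = 1) ∧
    ∀ i : Fin n, Q j i = 1 → a i = a j ∧ muVec Q a i = muVec Q a j + 1 := by
  obtain ⟨hQ1, hQ2⟩ := hQ
  have hQjj : Q j j = 0 := hQ1 j j (lt_irrefl j)
  have hsmat : ∀ k l : Fin n, Smat Q k l =
      -(∑ m, ((if k = m then (1:ℤ) else 0) - Q k m) *
        ((if m = l then (1:ℤ) else 0) - Q l m)) := by
    intro k l
    simp [Smat, Matrix.mul_apply, Matrix.sub_apply, Matrix.one_apply,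
      Matrix.transpose_apply]
  -- row sum of `Q` at `j` is 1
  have hterms : ∀ m : Fin n, ((if j = m then (1:ℤ) else 0) - Q j m) *
      ((if m = j then (1:ℤ) else 0) - Q j m) = (if j = m then 1 else 0) + Q j m := by
    intro m
    by_cases hm : j = m
    · subst hm; simp [hQjj]
    · rcases hQ2 j m with h | h <;> simp [hm, Ne.symm hm, h]
  have hrowsum : ∑ k, Q j k = 1 := by
    have h2' := hsmat j j
    rw [h2, Finset.sum_congr rfl (fun m _ => hterms m), Finset.sum_add_distrib] at h2'
    simp [Finset.sum_ite_eq] at h2'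
    linarith
  -- existence and uniqueness of `i`
  have hexu : ∃! i : Fin n, Q j i = 1 := by
    have hex : ∃ i, Q j i = 1 := by
      by_contra hc
      push_neg at hc
      have : ∑ k, Q j k = 0 :=
        Finset.sum_eq_zero (fun k _ => (hQ2 j k).resolve_right (hc k))
      omega
    obtain ⟨i, hi⟩ := hex
    refine ⟨i, hi, ?_⟩
    intro i' hi'
    by_contra hne
    have hpair : ∑ k ∈ ({i', i} : Finset (Fin n)), Q j k = 2 := by
      rw [Finset.sum_pair hne, hi, hi']; norm_num
    have hle : ∑ k ∈ ({i', i} : Finset (Fin n)), Q j k ≤ ∑ k, Q j k := by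
      apply Finset.sum_le_sum_of_subset_of_nonneg (Finset.subset_univ _)
      intro k _ _
      rcases hQ2 j k with h | h <;> rw [h] <;> norm_num
    omega
  obtain ⟨i, hi, hiu⟩ := hexu
  have hrow : ∀ l, Q j l = if l = i then 1 else 0 := by
    intro l
    by_cases hl : l = i
    · subst hl; simp [hi]
    · rcases hQ2 j l with h | h
      · simp [hl, h]
      · exact absurd (hiu l h) hl
  have hji : j < i := by
    by_contra h
    rw [hQ1 j i h] at hi
    exact absurd hi (by norm_num)
  -- a i = a j
  have hγ := hterm.1 j h1
  have hγ' : gammaVec Q a j = a j - a i := by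
    unfold gammaVec
    have hc : ∀ k : Fin n, a k * ((if j = k then (1:ℤ) else 0) - Q j k) =
        (if j = k then a k else 0) - (if k = i then a k else 0) := by
      intro k
      rw [hrow k]
      split_ifs <;> ring
    simp only [Matrix.vecMul, dotProduct, Matrix.transpose_apply,
      Matrix.sub_apply, Matrix.one_apply]
    rw [Finset.sum_congr rfl (fun k _ => hc k), Finset.sum_sub_distrib]
    simp [Finset.sum_ite_eq, Finset.sum_ite_eq']
  have haij : a i = a j := by
    rw [hγ'] at hγ
    linarith
  -- parity of μ_j
  have hNβ : betaVec Q a ᵥ* (1 - Q) = a := by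
    unfold betaVec
    rw [Matrix.vecMul_vecMul, pm_Mmat_mul Q hQ1, Matrix.vecMul_one]
  have ha_eq : ∀ m, a m = betaVec Q a m - ∑ k, betaVec Q a k * Q k m := by
    intro m
    conv_lhs => rw [← hNβ]
    have hc : ∀ k : Fin n, betaVec Q a k * ((if k = m then (1:ℤ) else 0) - Q k m) =
        (if k = m then betaVec Q a k else 0) - betaVec Q a k * Q k m := by
      intro k
      split_ifs <;> ring
    simp only [Matrix.vecMul, dotProduct, Matrix.sub_apply, Matrix.one_apply]
    rw [Finset.sum_congr rfl (fun k _ => hc k), Finset.sum_sub_distrib]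
    simp [Finset.sum_ite_eq']
  have hμdef : ∀ m, muVec Q a m = a m + ∑ k, epsVec Q a k * Q k m := by
    intro m
    simp [muVec, Matrix.vecMul, dotProduct]
  have hμ : ∀ m, muVec Q a m =
      betaVec Q a m - ∑ k, (betaVec Q a k - epsVec Q a k) * Q k m := by
    intro m
    rw [hμdef m, ha_eq m,
      Finset.sum_congr rfl (fun k _ => sub_mul (betaVec Q a k) (epsVec Q a k) (Q k m)),
      Finset.sum_sub_distrib]
    ring
  have hdvd : ∀ m, (2:ℤ) ∣ ∑ k, (betaVec Q a k - epsVec Q a k) * Q k m := by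
    intro m
    apply Finset.dvd_sum
    intro k _
    apply Dvd.dvd.mul_right
    have he : epsVec Q a k = betaVec Q a k % 2 := rfl
    omega
  have hodd : Odd (muVec Q a j) := by
    rw [Int.odd_iff]
    have h1' : betaVec Q a j % 2 = 1 := h1
    have hm := hμ j
    have hd := hdvd j
    omega
  refine ⟨hodd, ⟨i, hi, hiu⟩, ?_⟩
  intro i' hi'
  rw [hiu i' hi']
  refine ⟨haij, ?_⟩
  -- μ_i = μ_j + 1
  have hεk : ∀ k, epsVec Q a k = 0 ∨ epsVec Q a k = 1 := fun k =>
    Int.emod_two_eq (betaVec Q a k)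
  have hQij0 : Q i j = 0 := hQ1 i j (fun h => absurd (lt_trans hji h) (lt_irrefl _))
  have hQii0 : Q i i = 0 := hQ1 i i (lt_irrefl i)
  have key : ∀ k, k ≠ j → epsVec Q a k = 1 → Q k i = Q k j := by
    intro k hkj hεk1
    by_cases hki : k = i
    · subst hki; rw [hQii0, hQij0]
    · have hS := hterm.2.1 k j hkj hεk1 h1
      rw [hsmat k j] at hS
      have hcomp : ∀ m : Fin n, ((if k = m then (1:ℤ) else 0) - Q k m) *
            ((if m = j then (1:ℤ) else 0) - Q j m)
          = (if m = j then ((if k = m then (1:ℤ) else 0) - Q k m) else 0)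
            - (if m = i then ((if k = m then (1:ℤ) else 0) - Q k m) else 0) := by
        intro m
        rw [hrow m]
        split_ifs <;> ring
      rw [Finset.sum_congr rfl (fun m _ => hcomp m), Finset.sum_sub_distrib] at hS
      simp only [Finset.sum_ite_eq, Finset.sum_ite_eq', Finset.mem_univ, if_true] at hS
      rw [if_neg hkj, if_neg hki] at hS
      linarith
  have hsum : ∑ k, (epsVec Q a k * Q k i - epsVec Q a k * Q k j) = 1 := by
    rw [Finset.sum_eq_single j]
    · rw [h1, hi, hQjj]; ring
    · intro k _ hkj
      rcases hεk k with h | h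
      · rw [h]; ring
      · rw [key k hkj h]; ring
    · intro h; exact absurd (Finset.mem_univ j) h
  rw [Finset.sum_sub_distrib] at hsum
  rw [hμdef i, hμdef j, haij]
  linarith
end
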